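/- arXiv:math/0403156 — 4 statements merged into one kernel-verified Lean document; each statement's English description precedes it below -/
import Mathlib

section
/- If M is a Gorenstein projective R-module, then Ext^m_R(M, T) = 0 for all m > 0 and all R-modules T of finite projective dimension. -/
open CategoryTheory Limits

/-- A module `M` is Gorenstein projective if it is a cokernel in an exact (acyclic)
complex of projective modules which stays exact under `Hom_R(-, Q)` for every
projective module `Q` (a complete projective resolution). -/
def IsGorensteinProjective (R : Type) [Ring R] (M : Type) [AddCommGroup M] [Module R M] :
    Prop :=
  ∃ C : ChainComplex (ModuleCat.{0} R) ℤ,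
    (∀ n : ℤ, C.ExactAt n) ∧
    (∀ n : ℤ, Module.Projective R (C.X n)) ∧
    Nonempty (M ≃ₗ[R] ((C.X 0) ⧸ LinearMap.range ((C.d 1 0).hom : C.X 1 →ₗ[R] C.X 0))) ∧
    (∀ (Q : Type) (_ : AddCommGroup Q) (_ : Module R Q), Module.Projective R Q →
      ∀ (n : ℤ) (f : C.X n →ₗ[R] Q),
        f.comp ((C.d (n + 1) n).hom : C.X (n + 1) →ₗ[R] C.X n) = 0 →
          ∃ g : C.X (n - 1) →ₗ[R] Q,
            g.comp ((C.d n (n - 1)).hom : C.X n →ₗ[R] C.X (n - 1)) = f)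

/-- A module `N` is Gorenstein injective if it is a kernel in an exact (acyclic)
complex of injective modules which stays exact under `Hom_R(J, -)` for every
injective module `J` (a complete injective resolution). -/
def IsGorensteinInjective (R : Type) [Ring R] (N : Type) [AddCommGroup N] [Module R N] :
    Prop :=
  ∃ C : ChainComplex (ModuleCat.{0} R) ℤ,
    (∀ n : ℤ, C.ExactAt n) ∧
    (∀ n : ℤ, Module.Injective R (C.X n)) ∧
    Nonempty (N ≃ₗ[R] LinearMap.ker ((C.d 0 (-1)).hom : C.X 0 →ₗ[R] C.X (-1))) ∧
    (∀ (J : Type) (_ : AddCommGroup J) (_ : Module R J), Module.Injective R J →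
      ∀ (n : ℤ) (f : J →ₗ[R] C.X n),
        ((C.d n (n - 1)).hom : C.X n →ₗ[R] C.X (n - 1)).comp f = 0 →
          ∃ g : J →ₗ[R] C.X (n + 1),
            ((C.d (n + 1) n).hom : C.X (n + 1) →ₗ[R] C.X n).comp g = f)

/-- `M` has projective dimension at most `n`: there is an exact complex
`0 → P_n → ⋯ → P_0 → M → 0` with each `P_i` projective, encoded as an acyclic
complex with `M` placed in degree `-1` and projectives in degrees `0, …, n`. -/
def HasProjDimLE (R : Type) [Ring R] (M : Type) [AddCommGroup M] [Module R M]
    (n : ℕ) : Prop :=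
  ∃ C : ChainComplex (ModuleCat.{0} R) ℤ,
    (∀ i : ℤ, C.ExactAt i) ∧
    Nonempty (M ≃ₗ[R] C.X (-1)) ∧
    (∀ i : ℤ, 0 ≤ i → Module.Projective R (C.X i)) ∧
    (∀ i : ℤ, i < -1 ∨ (n : ℤ) < i → IsZero (C.X i))

/-- `M` has finite projective dimension. -/
def HasFinProjDim (R : Type) [Ring R] (M : Type) [AddCommGroup M] [Module R M] : Prop :=
  ∃ n : ℕ, HasProjDimLE R M n

/-- `M` has injective dimension at most `n`: there is an exact complex
`0 → M → I^0 → ⋯ → I^n → 0` with each `I^j` injective, encoded as an acyclic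
complex with `M` placed in degree `1` and injectives in degrees `0, -1, …, -n`. -/
def HasInjDimLE (R : Type) [Ring R] (M : Type) [AddCommGroup M] [Module R M]
    (n : ℕ) : Prop :=
  ∃ C : ChainComplex (ModuleCat.{0} R) ℤ,
    (∀ i : ℤ, C.ExactAt i) ∧
    Nonempty (M ≃ₗ[R] C.X 1) ∧
    (∀ i : ℤ, i ≤ 0 → Module.Injective R (C.X i)) ∧
    (∀ i : ℤ, 1 < i ∨ i < -(n : ℤ) → IsZero (C.X i))

/-- `M` has finite injective dimension. -/
def HasFinInjDim (R : Type) [Ring R] (M : Type) [AddCommGroup M] [Module R M] : Prop :=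
  ∃ n : ℕ, HasInjDimLE R M n


section GPAux
open Function


section Aux
variable {R : Type} [Ring R] (C : ChainComplex (ModuleCat.{0} R) ℤ)

/-- generalized-index lifting property of the complex `C` against a module `N`. -/
def LiftsFrom (N : Type) [AddCommGroup N] [Module R N] : Prop :=
  ∀ (n m l : ℤ), m = n + 1 → l = n - 1 → ∀ f : C.X n →ₗ[R] N,
    f.comp ((C.d m n).hom : C.X m →ₗ[R] C.X n) = 0 →
      ∃ g : C.X l →ₗ[R] N, g.comp ((C.d n l).hom : C.X n →ₗ[R] C.X l) = f

lemma liftsFrom_of_spec {N : Type} [AddCommGroup N] [Module R N]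
    (h : ∀ (n : ℤ) (f : C.X n →ₗ[R] N),
      f.comp ((C.d (n + 1) n).hom : C.X (n + 1) →ₗ[R] C.X n) = 0 →
        ∃ g : C.X (n - 1) →ₗ[R] N,
          g.comp ((C.d n (n - 1)).hom : C.X n →ₗ[R] C.X (n - 1)) = f) :
    LiftsFrom C N := by
  intro n m l hm hl
  subst hm hl
  exact h n

lemma liftsFrom_congr {N N' : Type} [AddCommGroup N] [Module R N] [AddCommGroup N']
    [Module R N'] (e : N ≃ₗ[R] N') (h : LiftsFrom C N) : LiftsFrom C N' := by
  intro n m l hm hl f hf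
  obtain ⟨g, hg⟩ := h n m l hm hl ((e.symm : N' →ₗ[R] N).comp f)
    (by rw [LinearMap.comp_assoc, hf, LinearMap.comp_zero])
  refine ⟨(e : N →ₗ[R] N').comp g, ?_⟩
  rw [LinearMap.comp_assoc, hg]
  ext x
  simp

lemma liftsFrom_of_subsingleton {N : Type} [AddCommGroup N] [Module R N]
    [Subsingleton N] : LiftsFrom C N := by
  intro n m l hm hl f hf
  exact ⟨0, by ext x; exact Subsingleton.elim _ _⟩

/-- key inductive step: lifting through a projective hull. -/
lemma liftsFrom_step
    (hC : ∀ n : ℤ, Module.Projective R (C.X n))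
    (hproj : ∀ (Q : Type) (iA : AddCommGroup Q) (iM : Module R Q),
      Module.Projective R Q → LiftsFrom C Q)
    {P N : Type} [AddCommGroup P] [Module R P] [AddCommGroup N] [Module R N]
    (hP : Module.Projective R P) (p : P →ₗ[R] N) (hp : Surjective p)
    (hK : LiftsFrom C (LinearMap.ker p)) : LiftsFrom C N := by
  intro n m l hm hl f hf
  subst hm hl
  haveI := hC n
  obtain ⟨f', hf'⟩ := Module.projective_lifting_property p f hp
  -- h := f' ∘ d lands in ker p
  have hmem : ∀ x : C.X (n + 1),
      f' (((C.d (n+1) n).hom : C.X (n+1) →ₗ[R] C.X n) x) ∈ LinearMap.ker p := by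
    intro x
    have : p (f' (((C.d (n+1) n).hom : C.X (n+1) →ₗ[R] C.X n) x)) =
        f (((C.d (n+1) n).hom : C.X (n+1) →ₗ[R] C.X n) x) := by
      rw [← hf']; rfl
    simpa [LinearMap.mem_ker, this] using LinearMap.congr_fun hf x
  set k0 : C.X (n+1) →ₗ[R] LinearMap.ker p :=
    LinearMap.codRestrict _ (f'.comp ((C.d (n+1) n).hom : C.X (n+1) →ₗ[R] C.X n)) hmem with hk0
  have hk0d : k0.comp ((C.d (n+1+1) (n+1)).hom : C.X (n+1+1) →ₗ[R] C.X (n+1)) = 0 := by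
    ext x
    have hdd : ((C.d (n+1) n).hom : C.X (n+1) →ₗ[R] C.X n)
        (((C.d (n+1+1) (n+1)).hom : C.X (n+1+1) →ₗ[R] C.X (n+1)) x) = 0 := by
      have h := C.d_comp_d (n+1+1) (n+1) n
      calc ((C.d (n+1) n).hom : C.X (n+1) →ₗ[R] C.X n)
            (((C.d (n+1+1) (n+1)).hom : C.X (n+1+1) →ₗ[R] C.X (n+1)) x)
          = (C.d (n+1+1) (n+1) ≫ C.d (n+1) n) x := rfl
        _ = (0 : C.X (n+1+1) ⟶ C.X n) x := by rw [h]
        _ = 0 := rfl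
    simp [k0, hdd]
  obtain ⟨k, hk⟩ := hK (n+1) (n+1+1) n rfl (by ring) k0 hk0d
  -- f' - ι ∘ k kills d
  have h2 : (f' - (LinearMap.ker p).subtype.comp k).comp
      ((C.d (n+1) n).hom : C.X (n+1) →ₗ[R] C.X n) = 0 := by
    ext x
    have hx : ((k (((C.d (n+1) n).hom : C.X (n+1) →ₗ[R] C.X n) x)) : P)
        = f' (((C.d (n+1) n).hom : C.X (n+1) →ₗ[R] C.X n) x) := by
      have h3 := LinearMap.congr_fun hk x
      simpa [k0] using congrArg Subtype.val h3
    simp [LinearMap.sub_comp, hx]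
  obtain ⟨g', hg'⟩ := hproj P inferInstance inferInstance hP n (n+1) (n-1) rfl rfl _ h2
  refine ⟨p.comp g', ?_⟩
  rw [LinearMap.comp_assoc, hg']
  ext x
  simp [← hf']

end Aux

end GPAux
section Aux2
variable {R : Type} [Ring R]

lemma exact_elem (D : ChainComplex (ModuleCat.{0} R) ℤ) {j : ℤ} (hD : D.ExactAt j)
    (i k : ℤ) (hi : i = j + 1) (hk : k = j - 1) (x : D.X j)
    (hx : ((D.d j k).hom : D.X j →ₗ[R] D.X k) x = 0) :
    ∃ y : D.X i, ((D.d i j).hom : D.X i →ₗ[R] D.X j) y = x := by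
  subst hi hk
  rw [HomologicalComplex.exactAt_iff' D (j+1) j (j-1) (by simp) (by simp)] at hD
  rw [ShortComplex.moduleCat_exact_iff] at hD
  exact hD x hx

lemma liftsFrom_of_hasProjDim (C : ChainComplex (ModuleCat.{0} R) ℤ)
    (hC : ∀ n : ℤ, Module.Projective R (C.X n))
    (hproj : ∀ (Q : Type) (iA : AddCommGroup Q) (iM : Module R Q),
      Module.Projective R Q → LiftsFrom C Q)
    (T : Type) [AddCommGroup T] [Module R T] (hT : HasFinProjDim R T) :
    LiftsFrom C T := by
  obtain ⟨n, D, hex, ⟨e⟩, hpr, hz⟩ := hT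
  have key : ∀ j : ℕ, j ≤ n + 1 → LiftsFrom C
      (LinearMap.ker ((D.d ((n:ℤ) - j) ((n:ℤ) - j - 1)).hom :
        D.X ((n:ℤ) - j) →ₗ[R] D.X ((n:ℤ) - j - 1))) := by
    intro j
    induction j with
    | zero =>
      intro _
      have key0 : ∀ a : ℤ, a = (n:ℤ) → ∀ x : D.X a,
          ((D.d a (a-1)).hom : D.X a →ₗ[R] D.X (a-1)) x = 0 → x = 0 := by
        intro a ha x hx
        subst ha
        obtain ⟨u, hu⟩ := exact_elem D (hex (n:ℤ)) ((n:ℤ)+1) ((n:ℤ)-1) rfl rfl x hx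
        have hz1 : IsZero (D.X ((n:ℤ)+1)) := hz ((n:ℤ)+1) (Or.inr (by omega))
        have h0 : ((𝟙 (D.X ((n:ℤ)+1))).hom : D.X ((n:ℤ)+1) →ₗ[R] D.X ((n:ℤ)+1)) = 0 := by
          rw [hz1.eq_of_src (𝟙 (D.X ((n:ℤ)+1))) 0]; rfl
        have hu0 : u = 0 := LinearMap.congr_fun h0 u
        rw [← hu, hu0, map_zero]
      haveI : Subsingleton (LinearMap.ker
          ((D.d ((n:ℤ) - ((0:ℕ):ℤ)) ((n:ℤ) - ((0:ℕ):ℤ) - 1)).hom :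
            D.X ((n:ℤ) - ((0:ℕ):ℤ)) →ₗ[R] D.X ((n:ℤ) - ((0:ℕ):ℤ) - 1))) := by
        constructor
        rintro ⟨x, hx⟩ ⟨y, hy⟩
        have h0 : ((n:ℤ) - ((0:ℕ):ℤ)) = (n:ℤ) := by push_cast; ring
        exact Subtype.ext ((key0 _ h0 x hx).trans (key0 _ h0 y hy).symm)
      exact liftsFrom_of_subsingleton C
    | succ j ih =>
      intro hj
      have hj' : j ≤ n + 1 := by omega
      set i : ℤ := (n:ℤ) - j with hi
      have hcast : ((n:ℤ) - ((j:ℕ)+1 : ℕ)) = i - 1 := by push_cast; ring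
      rw [hcast]
      -- surjection p : D.X i → ker (D.d (i-1) (i-1-1))
      have hmem : ∀ x : D.X i, ((D.d i (i-1)).hom : D.X i →ₗ[R] D.X (i-1)) x ∈
          LinearMap.ker ((D.d (i-1) (i-1-1)).hom : D.X (i-1) →ₗ[R] D.X (i-1-1)) := by
        intro x
        have h4 : D.d i (i-1) ≫ D.d (i-1) (i-1-1) = 0 := D.d_comp_d _ _ _
        have h5 := LinearMap.congr_fun
          (show (((D.d (i-1) (i-1-1)).hom : D.X (i-1) →ₗ[R] D.X (i-1-1)).comp
            ((D.d i (i-1)).hom : D.X i →ₗ[R] D.X (i-1)) : D.X i →ₗ[R] D.X (i-1-1)) = 0 from congrArg ModuleCat.Hom.hom h4) x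
        exact LinearMap.mem_ker.2 h5
      set p : D.X i →ₗ[R]
          LinearMap.ker ((D.d (i-1) (i-1-1)).hom : D.X (i-1) →ₗ[R] D.X (i-1-1)) :=
        LinearMap.codRestrict _ ((D.d i (i-1)).hom : D.X i →ₗ[R] D.X (i-1)) hmem with hp
      have hsurj : Function.Surjective p := by
        rintro ⟨y, hy⟩
        obtain ⟨x, hxy⟩ := exact_elem D (hex (i-1)) i (i-1-1) (by ring) rfl y hy
        exact ⟨x, Subtype.ext (by simpa [p] using hxy)⟩
      have hPi : Module.Projective R (D.X i) := hpr i (by omega)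
      refine liftsFrom_step C hC hproj hPi p hsurj ?_
      have hker : LinearMap.ker p =
          LinearMap.ker ((D.d i (i-1)).hom : D.X i →ₗ[R] D.X (i-1)) := by
        rw [hp, LinearMap.ker_codRestrict]
      exact liftsFrom_congr C (LinearEquiv.ofEq _ _ hker.symm) (ih hj')
  have hfin := key (n+1) le_rfl
  have hc1 : ((n:ℤ) - ((n:ℕ)+1 : ℕ)) = -1 := by push_cast; ring
  rw [hc1] at hfin
  have hd0 : ((D.d (-1) ((-1:ℤ)-1)).hom : D.X (-1) →ₗ[R] D.X ((-1:ℤ)-1)) = 0 := by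
    have hzero : IsZero (D.X ((-1:ℤ)-1)) := hz _ (Or.inl (by norm_num))
    have h6 : D.d (-1) ((-1:ℤ)-1) = 0 := hzero.eq_of_tgt _ _
    rw [h6]; rfl
  have hker : LinearMap.ker ((D.d (-1) ((-1:ℤ)-1)).hom : D.X (-1) →ₗ[R] D.X ((-1:ℤ)-1)) = ⊤ := by
    rw [hd0]; exact LinearMap.ker_zero
  refine liftsFrom_congr C ?_ hfin
  exact (LinearEquiv.ofEq _ _ hker).trans (Submodule.topEquiv.trans e.symm)
end Aux2

section ResAux


variable {R : Type} [Ring R] (C : ChainComplex (ModuleCat.{0} R) ℤ)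

-- cast check
example (n : ℕ) : ((n+1 : ℕ) : ℤ) = ((n:ℕ) : ℤ) + 1 := rfl

/-- ℕ-truncation of an ℤ-indexed complex -/
noncomputable def truncRes : ChainComplex (ModuleCat.{0} R) ℕ :=
  ChainComplex.of (fun n => C.X (n : ℤ)) (fun n => C.d ((n+1 : ℕ) : ℤ) ((n : ℕ) : ℤ))
    (fun n => C.d_comp_d _ _ _)

lemma truncRes_X (n : ℕ) : (truncRes C).X n = C.X (n : ℤ) := rfl

lemma truncRes_d (n : ℕ) : (truncRes C).d (n+1) n = C.d ((n+1 : ℕ) : ℤ) ((n : ℕ) : ℤ) :=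
  by unfold truncRes; exact ChainComplex.of_d (fun n : ℕ => C.X (n : ℤ)) (fun n : ℕ => C.d ((n+1 : ℕ) : ℤ) ((n : ℕ) : ℤ)) n

section Res
variable (hprojC : ∀ n : ℤ, Module.Projective R (C.X n))
  (M : ModuleCat.{0} R)
  (e : M ≃ₗ[R] ((C.X 0) ⧸ LinearMap.range ((C.d 1 0).hom : C.X 1 →ₗ[R] C.X 0)))

lemma exact_elem' (D : ChainComplex (ModuleCat.{0} R) ℤ) {j : ℤ} (hD : D.ExactAt j)
    (i k : ℤ) (hi : i = j + 1) (hk : k = j - 1) (x : D.X j)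
    (hx : ((D.d j k).hom : D.X j →ₗ[R] D.X k) x = 0) :
    ∃ y : D.X i, ((D.d i j).hom : D.X i →ₗ[R] D.X j) y = x := by
  subst hi hk
  rw [HomologicalComplex.exactAt_iff' D (j+1) j (j-1) (by simp) (by simp)] at hD
  rw [ShortComplex.moduleCat_exact_iff] at hD
  exact hD x hx

noncomputable def resP : C.X 0 →ₗ[R] M :=
  (e.symm : (C.X 0 ⧸ LinearMap.range ((C.d 1 0).hom : C.X 1 →ₗ[R] C.X 0)) →ₗ[R] M).comp
    (LinearMap.range ((C.d 1 0).hom : C.X 1 →ₗ[R] C.X 0)).mkQ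

lemma resP_surj : Function.Surjective (resP C M e) :=
  e.symm.surjective.comp (Submodule.mkQ_surjective _)

lemma resP_d (x : C.X 1) : resP C M e (((C.d 1 0).hom : C.X 1 →ₗ[R] C.X 0) x) = 0 := by
  unfold resP
  have : ((LinearMap.range ((C.d 1 0).hom : C.X 1 →ₗ[R] C.X 0)).mkQ)
      (((C.d 1 0).hom : C.X 1 →ₗ[R] C.X 0) x) = 0 := by
    rw [Submodule.mkQ_apply, Submodule.Quotient.mk_eq_zero]
    exact ⟨x, rfl⟩
  simp [this]

lemma resP_ker (x : C.X 0) (hx : resP C M e x = 0) :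
    ∃ y : C.X 1, ((C.d 1 0).hom : C.X 1 →ₗ[R] C.X 0) y = x := by
  unfold resP at hx
  simp only [LinearMap.comp_apply] at hx
  have h1 : ((LinearMap.range ((C.d 1 0).hom : C.X 1 →ₗ[R] C.X 0)).mkQ) x = 0 := by
    have := e.symm.injective (a₁ := ((LinearMap.range ((C.d 1 0).hom : C.X 1 →ₗ[R] C.X 0)).mkQ) x)
      (a₂ := 0) (by simpa using hx)
    exact this
  rw [Submodule.mkQ_apply, Submodule.Quotient.mk_eq_zero] at h1
  obtain ⟨y, hy⟩ := h1
  exact ⟨y, hy⟩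

noncomputable def resπ : truncRes C ⟶ (ChainComplex.single₀ (ModuleCat.{0} R)).obj M :=
  (ChainComplex.toSingle₀Equiv _ _).symm ⟨ModuleCat.ofHom (resP C M e), by
    rw [truncRes_d]
    ext x
    exact resP_d C M e x⟩

lemma resπ_f_zero : (resπ C M e).f 0 = ModuleCat.ofHom (resP C M e) := by
  unfold resπ
  exact ChainComplex.toSingle₀Equiv_symm_apply_f_zero _ _

lemma truncRes_exactAt_succ (hex : ∀ n : ℤ, C.ExactAt n) (n : ℕ) : (truncRes C).ExactAt (n + 1) := by
  rw [HomologicalComplex.exactAt_iff' _ (n+2) (n+1) n (by simp) (by simp [ChainComplex.next])]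
  rw [ShortComplex.moduleCat_exact_iff]
  intro x hx
  have hx' : ((C.d ((n+1:ℕ) : ℤ) ((n:ℕ) : ℤ)).hom : C.X ((n+1:ℕ):ℤ) →ₗ[R] C.X ((n:ℕ):ℤ)) x = 0 := by
    have hd := truncRes_d C n
    rw [show ((truncRes C).sc' (n+2) (n+1) n).g = (truncRes C).d (n+1) n from rfl, hd] at hx
    exact hx
  obtain ⟨y, hy⟩ := exact_elem' C (hex ((n+1:ℕ):ℤ)) ((n+2:ℕ):ℤ) ((n:ℕ):ℤ) rfl
    (by push_cast; ring) x hx'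
  refine ⟨y, ?_⟩
  rw [show ((truncRes C).sc' (n+2) (n+1) n).f = (truncRes C).d (n+2) (n+1) from rfl,
    truncRes_d C (n+1)]
  exact hy

noncomputable def gorensteinRes (hex : ∀ n : ℤ, C.ExactAt n) : ProjectiveResolution M where
  complex := truncRes C
  projective n := (IsProjective.iff_projective _).1 (hprojC (n : ℤ))
  π := resπ C M e
  quasiIso := ⟨fun n => by
    cases n with
    | zero =>
      rw [ChainComplex.quasiIsoAt₀_iff, ShortComplex.quasiIso_iff_of_zeros']
      · constructor
        · rw [ShortComplex.moduleCat_exact_iff]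
          intro x hx
          have hx0 : resP C M e x = 0 := by
            have h2 := LinearMap.congr_fun (congrArg ModuleCat.Hom.hom (resπ_f_zero C M e)) x
            exact h2.symm.trans hx
          obtain ⟨y, hy⟩ := resP_ker C M e x hx0
          refine ⟨y, ?_⟩
          have h3 := LinearMap.congr_fun (congrArg ModuleCat.Hom.hom (truncRes_d C 0)) y
          exact h3.trans hy
        · rw [show ((HomologicalComplex.shortComplexFunctor' (ModuleCat.{0} R) _ 1 0 0).map
            (resπ C M e)).τ₂ = (resπ C M e).f 0 from rfl, resπ_f_zero]
          exact (ModuleCat.epi_iff_surjective _).2 (resP_surj C M e)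
      · rfl
      · rfl
      · rfl
    | succ n =>
      rw [quasiIsoAt_iff_exactAt' _ _ (ChainComplex.exactAt_succ_single_obj _ _)]
      exact truncRes_exactAt_succ C hex n⟩
end Res

end ResAux

/-- If `M` is a Gorenstein projective `R`-module, then `Ext^m_R(M, T) = 0` for all
`m > 0` and all `R`-modules `T` of finite projective dimension. -/
theorem ext_vanishes_of_gorensteinProjective_of_finProjDim
    (R : Type) [Ring R] (M T : ModuleCat.{0} R)
    (hM : IsGorensteinProjective R M) (hT : HasFinProjDim R T)
    (m : ℕ) (hm : 0 < m) :
    Subsingleton (((Ext ℤ (ModuleCat.{0} R) m).obj (Opposite.op M)).obj T) := by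
  obtain ⟨C, hex, hprojC, ⟨e⟩, hlift⟩ := hM
  have hproj : ∀ (Q : Type) (iA : AddCommGroup Q) (iM : Module R Q),
      Module.Projective R Q → LiftsFrom C Q := fun Q iA iM hQ =>
    liftsFrom_of_spec C (hlift Q iA iM hQ)
  have hLift : LiftsFrom C T := liftsFrom_of_hasProjDim C hprojC hproj T hT
  let res : ProjectiveResolution M := gorensteinRes C hprojC M e hex
  obtain ⟨k, rfl⟩ : ∃ k, m = k + 1 := ⟨m - 1, by omega⟩
  have hEx : ((truncRes C).linearYonedaObj ℤ T).ExactAt (k+1) := by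
    rw [HomologicalComplex.exactAt_iff' _ k (k+1) (k+2) (by simp) (by simp)]
    rw [ShortComplex.moduleCat_exact_iff]
    intro f hf
    have h1 : ((truncRes C).linearYonedaObj ℤ T).d (k+1) (k+2) f
        = (truncRes C).d (k+2) (k+1) ≫ (f : (truncRes C).X (k+1) ⟶ T) := by
      rw [ChainComplex.linearYonedaObj_d]; rfl
    have hcond : (((f : (truncRes C).X (k+1) ⟶ T).hom : C.X ((k+1:ℕ):ℤ) →ₗ[R] T)).comp
        ((C.d ((k+2:ℕ):ℤ) ((k+1:ℕ):ℤ)).hom : C.X ((k+2:ℕ):ℤ) →ₗ[R] C.X ((k+1:ℕ):ℤ)) = 0 := by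
      have h2 : (truncRes C).d (k+2) (k+1) ≫ (f : (truncRes C).X (k+1) ⟶ T) = 0 :=
        h1.symm.trans hf
      rw [truncRes_d C (k+1)] at h2
      exact congrArg ModuleCat.Hom.hom h2
    obtain ⟨g, hg⟩ := hLift ((k+1:ℕ):ℤ) ((k+2:ℕ):ℤ) ((k:ℕ):ℤ)
      (by push_cast; ring) (by push_cast; ring) _ hcond
    refine ⟨ModuleCat.ofHom g, ?_⟩
    have h3 : ((truncRes C).linearYonedaObj ℤ T).d k (k+1) (ModuleCat.ofHom g)
        = (truncRes C).d (k+1) k ≫ (ModuleCat.ofHom g : (truncRes C).X k ⟶ T) := by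
      rw [ChainComplex.linearYonedaObj_d]; rfl
    refine h3.trans ?_
    rw [truncRes_d C k]
    exact ModuleCat.hom_ext hg
  have hzero : IsZero ((((truncRes C).linearYonedaObj ℤ T)).homology (k+1)) := by
    rw [← HomologicalComplex.exactAt_iff_isZero_homology]
    exact hEx
  have hzero2 : IsZero (((Ext ℤ (ModuleCat.{0} R) (k+1)).obj (Opposite.op M)).obj T) :=
    IsZero.of_iso hzero (res.isoExt (k+1) T)
  constructor
  intro a b
  have h0 : 𝟙 (((Ext ℤ (ModuleCat.{0} R) (k+1)).obj (Opposite.op M)).obj T) = 0 :=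
    hzero2.eq_of_src _ _
  have ha : a = 0 := by
    calc a = (𝟙 (((Ext ℤ (ModuleCat.{0} R) (k+1)).obj (Opposite.op M)).obj T)) a := rfl
      _ = (0 : (((Ext ℤ (ModuleCat.{0} R) (k+1)).obj (Opposite.op M)).obj T) ⟶
            (((Ext ℤ (ModuleCat.{0} R) (k+1)).obj (Opposite.op M)).obj T)) a := by rw [h0]
      _ = 0 := rfl
  have hb : b = 0 := by
    calc b = (𝟙 (((Ext ℤ (ModuleCat.{0} R) (k+1)).obj (Opposite.op M)).obj T)) b := rfl
      _ = (0 : (((Ext ℤ (ModuleCat.{0} R) (k+1)).obj (Opposite.op M)).obj T) ⟶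
            (((Ext ℤ (ModuleCat.{0} R) (k+1)).obj (Opposite.op M)).obj T)) b := by rw [h0]
      _ = 0 := rfl
  exact ha.trans hb.symm
end

section
/- If M is a Gorenstein projective R-module, then Ext^m_R(M, T) = 0 for all m > 0 and all R-modules T of finite injective dimension. -/
open CategoryTheory Limits

section Helpers

variable {R : Type} [Ring R]

lemma range_eq_ker_of_exactAt (C : ChainComplex (ModuleCat.{0} R) ℤ)
    (hex : ∀ n : ℤ, C.ExactAt n) (i j k : ℤ) (hij : i = j + 1) (hjk : j = k + 1) :
    LinearMap.range ((C.d i j).hom : C.X i →ₗ[R] C.X j)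
      = LinearMap.ker ((C.d j k).hom : C.X j →ₗ[R] C.X k) := by
  have h := (HomologicalComplex.exactAt_iff' C i j k (by simp [hij]) (by simp [hjk])).1
    (hex j)
  exact (ShortComplex.moduleCat_exact_iff_range_eq_ker _).1 h

/-- The key extension property: maps from cycles of an everywhere-exact complex of
projectives into `T` extend one step backwards. -/
def ExtensionProp (R : Type) [Ring R] (T : Type) [AddCommGroup T] [Module R T] : Prop :=
  ∀ (C : ChainComplex (ModuleCat.{0} R) ℤ), (∀ n : ℤ, C.ExactAt n) →
    (∀ n : ℤ, Module.Projective R (C.X n)) →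
    ∀ (i j k : ℤ), i = j + 1 → j = k + 1 →
    ∀ f : C.X j →ₗ[R] T, f.comp ((C.d i j).hom : C.X i →ₗ[R] C.X j) = 0 →
    ∃ g : C.X k →ₗ[R] T, g.comp ((C.d j k).hom : C.X j →ₗ[R] C.X k) = f

lemma ExtensionProp.of_equiv {A B : Type} [AddCommGroup A] [Module R A]
    [AddCommGroup B] [Module R B] (e : A ≃ₗ[R] B) (hB : ExtensionProp R B) :
    ExtensionProp R A := by
  intro C hex hproj i j k hij hjk f hf
  obtain ⟨g, hg⟩ := hB C hex hproj i j k hij hjk (e.toLinearMap.comp f)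
    (by rw [LinearMap.comp_assoc, hf, LinearMap.comp_zero])
  refine ⟨e.symm.toLinearMap.comp g, ?_⟩
  ext x
  have := congrArg (fun (φ : _ →ₗ[R] B) => e.symm (φ x)) hg
  simpa using this

lemma extensionProp_of_subsingleton (T : Type) [AddCommGroup T] [Module R T]
    [Subsingleton T] : ExtensionProp R T := by
  intro C hex hproj i j k hij hjk f hf
  exact ⟨0, by ext x; exact Subsingleton.elim _ _⟩

lemma extensionProp_of_injective (T : Type) [AddCommGroup T] [Module R T]
    (hT : Module.Injective R T) : ExtensionProp R T := by
  intro C hex hproj i j k hij hjk f hf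
  have hrk := range_eq_ker_of_exactAt C hex i j k hij hjk
  have hker : LinearMap.ker ((C.d j k).hom : C.X j →ₗ[R] C.X k) ≤ LinearMap.ker f := by
    rw [← hrk]
    rintro x ⟨y, rfl⟩
    have : f (((C.d i j).hom : C.X i →ₗ[R] C.X j) y) = 0 := by
      have := congrArg (fun (φ : _ →ₗ[R] T) => φ y) hf
      simpa using this
    simpa using this
  set d := ((C.d j k).hom : C.X j →ₗ[R] C.X k)
  set S := LinearMap.range d with hS
  let e : (C.X j ⧸ LinearMap.ker d) ≃ₗ[R] S := d.quotKerEquivRange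
  let fbar : S →ₗ[R] T :=
    ((LinearMap.ker d).liftQ f hker).comp e.symm.toLinearMap
  obtain ⟨h, hh⟩ := hT.out S.subtype (Submodule.injective_subtype S) fbar
  refine ⟨h, ?_⟩
  ext x
  have hx : d x ∈ S := ⟨x, rfl⟩
  have h1 : h (d x) = fbar ⟨d x, hx⟩ := hh ⟨d x, hx⟩
  have h2 : e.symm ⟨d x, hx⟩ = (LinearMap.ker d).mkQ x :=
    d.quotKerEquivRange_symm_apply_image x hx
  show h (d x) = f x
  rw [h1]
  show (LinearMap.ker d).liftQ f hker (e.symm ⟨d x, hx⟩) = f x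
  rw [h2, Submodule.mkQ_apply, Submodule.liftQ_apply]

lemma extensionProp_of_ses (I A : Type) [AddCommGroup I] [Module R I]
    [AddCommGroup A] [Module R A]
    (hI : Module.Injective R I) (ι : A →ₗ[R] I) (hι : Function.Injective ι)
    (hB : ExtensionProp R (I ⧸ LinearMap.range ι)) : ExtensionProp R A := by
  intro C hex hproj i j k hij hjk f hf
  -- extend ι ∘ f one step
  obtain ⟨h1, hh1⟩ := extensionProp_of_injective I hI C hex hproj i j k hij hjk (ι.comp f)
    (by rw [LinearMap.comp_assoc, hf, LinearMap.comp_zero])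
  set π := (LinearMap.range ι).mkQ with hπ
  have hπι : π.comp ι = 0 := by
    ext a; simp [π, Submodule.Quotient.mk_eq_zero]
  -- apply hB at (j, k, k-1)
  obtain ⟨u, hu⟩ := hB C hex hproj j k (k - 1) hjk (by omega) (π.comp h1)
    (by rw [LinearMap.comp_assoc, hh1, ← LinearMap.comp_assoc, hπι,
          LinearMap.zero_comp])
  -- lift u along π using projectivity of C.X (k-1)
  haveI := hproj (k - 1)
  obtain ⟨v, hv⟩ := Module.projective_lifting_property π u
    (Submodule.mkQ_surjective _)
  set h' := h1 - v.comp ((C.d k (k - 1)).hom : C.X k →ₗ[R] C.X (k - 1)) with hh'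
  have hπh' : π.comp h' = 0 := by
    rw [hh']
    have : π.comp (h1 - v.comp ((C.d k (k-1)).hom : C.X k →ₗ[R] C.X (k-1)))
        = π.comp h1 - (π.comp v).comp ((C.d k (k-1)).hom : C.X k →ₗ[R] C.X (k-1)) := by
      ext x; simp
    rw [this, hv, hu, sub_self]
  have hrange : ∀ x, h' x ∈ LinearMap.range ι := by
    intro x
    have : π (h' x) = 0 := by
      have := congrArg (fun (φ : _ →ₗ[R] _) => φ x) hπh'
      simpa using this
    rw [hπ, Submodule.mkQ_apply, Submodule.Quotient.mk_eq_zero] at this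
    exact this
  let eA : A ≃ₗ[R] LinearMap.range ι := LinearEquiv.ofInjective ι hι
  let g : C.X k →ₗ[R] A :=
    eA.symm.toLinearMap.comp (h'.codRestrict (LinearMap.range ι) hrange)
  refine ⟨g, ?_⟩
  ext x
  apply hι
  show ι (g (((C.d j k).hom : C.X j →ₗ[R] C.X k) x)) = ι (f x)
  have h4 : ∀ a : A, ((eA a : LinearMap.range ι) : I) = ι a := by
    intro a
    simp [eA]
  have hιg : ∀ y, ι (g y) = h' y := by
    intro y
    show ι (eA.symm ⟨h' y, hrange y⟩) = h' y
    rw [← h4]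
    rw [eA.apply_symm_apply]
  rw [hιg]
  have hdd : ((C.d k (k-1)).hom : C.X k →ₗ[R] C.X (k-1)) (((C.d j k).hom : C.X j →ₗ[R] C.X k) x) = 0 := by
    have h5 : (C.d j k ≫ C.d k (k-1)) x = (0 : C.X j ⟶ C.X (k-1)) x := by
      rw [C.d_comp_d]
    exact h5
  have := congrArg (fun (φ : _ →ₗ[R] I) => φ x) hh1
  simp only [LinearMap.coe_comp, Function.comp_apply] at this
  simp [hh', hdd, this]

end Helpers


section InjDim

variable {R : Type} [Ring R]

lemma subsingleton_of_isZero {A : ModuleCat.{0} R} (h : IsZero A) : Subsingleton A := by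
  constructor
  intro a b
  have h1 : (𝟙 A : A ⟶ A) = 0 := h.eq_of_src _ _
  have hz : ∀ x : A, x = 0 := by
    intro x
    have h2 : (𝟙 A : A ⟶ A) x = (0 : A ⟶ A) x := by rw [h1]
    simpa using h2
  rw [hz a, hz b]

lemma extensionProp_of_hasInjDimLE (T : Type) [AddCommGroup T] [Module R T]
    {n : ℕ} (hT : HasInjDimLE R T n) : ExtensionProp R T := by
  obtain ⟨D, hexD, ⟨e⟩, hinj, hzero⟩ := hT
  have key : ∀ (t : ℕ) (j : ℤ), j ≤ 0 → j < -(n:ℤ) + t →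
      ExtensionProp R ↥(LinearMap.ker ((D.d j (j-1)).hom : D.X j →ₗ[R] D.X (j-1))) := by
    intro t
    induction t with
    | zero =>
      intro j hj0 hjb
      have hz : IsZero (D.X j) := hzero j (Or.inr (by omega))
      haveI : Subsingleton (D.X j) := subsingleton_of_isZero hz
      exact extensionProp_of_subsingleton _
    | succ t ih =>
      intro j hj0 hjb
      have hIinj : Module.Injective R ↥(D.X j) := hinj j hj0
      refine extensionProp_of_ses (↥(D.X j)) _ hIinj
        (LinearMap.ker ((D.d j (j-1)).hom : D.X j →ₗ[R] D.X (j-1))).subtype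
        (Submodule.injective_subtype _) ?_
      have hr : LinearMap.range
          (LinearMap.ker ((D.d j (j-1)).hom : D.X j →ₗ[R] D.X (j-1))).subtype
          = LinearMap.ker ((D.d j (j-1)).hom : D.X j →ₗ[R] D.X (j-1)) :=
        Submodule.range_subtype _
      have hrk := range_eq_ker_of_exactAt D hexD j (j-1) (j-1-1) (by omega) (by omega)
      have e1 : (↥(D.X j) ⧸ LinearMap.range
            (LinearMap.ker ((D.d j (j-1)).hom : D.X j →ₗ[R] D.X (j-1))).subtype)
          ≃ₗ[R] ↥(LinearMap.ker ((D.d (j-1) (j-1-1)).hom : D.X (j-1) →ₗ[R] D.X (j-1-1))) :=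
        (Submodule.quotEquivOfEq _ _ hr).trans
          ((((D.d j (j-1)).hom : D.X j →ₗ[R] D.X (j-1)).quotKerEquivRange).trans
            (LinearEquiv.ofEq _ _ hrk))
      exact ExtensionProp.of_equiv e1 (ih (j-1) (by omega) (by omega))
  -- now transport to T
  have h2z : IsZero (D.X 2) := hzero 2 (Or.inl (by omega))
  haveI : Subsingleton (D.X 2) := subsingleton_of_isZero h2z
  have hrange0 : LinearMap.range ((D.d 2 1).hom : D.X 2 →ₗ[R] D.X 1) = ⊥ := by
    rw [LinearMap.range_eq_bot]
    apply LinearMap.ext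
    intro x
    rw [Subsingleton.elim x 0, map_zero]
    rfl
  have hk10 : LinearMap.ker ((D.d 1 0).hom : D.X 1 →ₗ[R] D.X 0) = ⊥ := by
    rw [← range_eq_ker_of_exactAt D hexD 2 1 0 (by omega) (by omega)]
    exact hrange0
  have hinj10 : Function.Injective ((D.d 1 0).hom : D.X 1 →ₗ[R] D.X 0) :=
    LinearMap.ker_eq_bot.1 hk10
  have e2 : ↥(D.X 1) ≃ₗ[R] LinearMap.range ((D.d 1 0).hom : D.X 1 →ₗ[R] D.X 0) :=
    LinearEquiv.ofInjective _ hinj10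
  have hrk2 := range_eq_ker_of_exactAt D hexD 1 0 (0-1) (by omega) (by omega)
  have e3 : ↥(LinearMap.range ((D.d 1 0).hom : D.X 1 →ₗ[R] D.X 0))
      ≃ₗ[R] ↥(LinearMap.ker ((D.d 0 (0-1)).hom : D.X 0 →ₗ[R] D.X (0-1))) :=
    LinearEquiv.ofEq _ _ hrk2
  exact ExtensionProp.of_equiv (e.trans (e2.trans e3)) (key (n+1) 0 le_rfl (by omega))

lemma subsingleton_of_isZero' {S : Type} [Ring S] {A : ModuleCat.{0} S} (h : IsZero A) :
    Subsingleton A := by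
  constructor
  intro a b
  have h1 : (𝟙 A : A ⟶ A) = 0 := h.eq_of_src _ _
  have hz : ∀ x : A, x = 0 := by
    intro x
    have h2 : (𝟙 A : A ⟶ A) x = (0 : A ⟶ A) x := by rw [h1]
    simpa using h2
  rw [hz a, hz b]

lemma extensionProp_of_hasFinInjDim (T : Type) [AddCommGroup T] [Module R T]
    (hT : HasFinInjDim R T) : ExtensionProp R T := by
  obtain ⟨n, hn⟩ := hT
  exact extensionProp_of_hasInjDimLE T hn

end InjDim

section Resolution

variable {R : Type} [Ring R]

noncomputable def resComplex (C : ChainComplex (ModuleCat.{0} R) ℤ) :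
    ChainComplex (ModuleCat.{0} R) ℕ :=
  ChainComplex.of (fun n => C.X n) (fun n => C.d ((n+1 : ℕ) : ℤ) n)
    (fun n => C.d_comp_d _ _ _)

lemma resComplex_d (C : ChainComplex (ModuleCat.{0} R) ℤ) (n : ℕ) :
    (resComplex C).d (n+1) n = C.d ((n+1 : ℕ) : ℤ) n :=
  ChainComplex.of_d (fun (n : ℕ) => C.X n) (fun (n : ℕ) => C.d ((n+1 : ℕ) : ℤ) n) n

lemma resComplex_X (C : ChainComplex (ModuleCat.{0} R) ℤ) (n : ℕ) :
    (resComplex C).X n = C.X n := rfl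

lemma resComplex_exactAt (C : ChainComplex (ModuleCat.{0} R) ℤ)
    (hex : ∀ n : ℤ, C.ExactAt n) (n : ℕ) : (resComplex C).ExactAt (n+1) := by
  rw [HomologicalComplex.exactAt_iff' _ (n+1+1) (n+1) n (by simp) (by simp)]
  rw [ShortComplex.moduleCat_exact_iff_range_eq_ker]
  dsimp [HomologicalComplex.sc', HomologicalComplex.shortComplexFunctor']
  rw [resComplex_d C (n+1), resComplex_d C n]
  exact range_eq_ker_of_exactAt C hex _ _ _ (by push_cast; ring) (by push_cast; ring)

noncomputable def resQuot (C : ChainComplex (ModuleCat.{0} R) ℤ) (M : ModuleCat.{0} R)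
    (e : M ≃ₗ[R] ((C.X 0) ⧸ LinearMap.range ((C.d 1 0).hom : C.X 1 →ₗ[R] C.X 0))) :
    (resComplex C).X 0 ⟶ M :=
  ModuleCat.ofHom (e.symm.toLinearMap.comp (LinearMap.range ((C.d 1 0).hom : C.X 1 →ₗ[R] C.X 0)).mkQ :
    ↥(C.X 0) →ₗ[R] ↥M)

lemma resQuot_comp (C : ChainComplex (ModuleCat.{0} R) ℤ) (M : ModuleCat.{0} R)
    (e : M ≃ₗ[R] ((C.X 0) ⧸ LinearMap.range ((C.d 1 0).hom : C.X 1 →ₗ[R] C.X 0))) :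
    (resComplex C).d 1 0 ≫ resQuot C M e = 0 := by
  have h10 : (resComplex C).d 1 0 = (C.d 1 0 : C.X 1 ⟶ C.X 0) := resComplex_d C 0
  rw [h10]
  apply ModuleCat.hom_ext
  apply LinearMap.ext
  intro x
  show e.symm (Submodule.Quotient.mk (((C.d 1 0).hom : C.X 1 →ₗ[R] C.X 0) x)) = 0
  have hz : (Submodule.Quotient.mk (((C.d 1 0).hom : C.X 1 →ₗ[R] C.X 0) x)
      : ↥(C.X 0) ⧸ LinearMap.range ((C.d 1 0).hom : C.X 1 →ₗ[R] C.X 0)) = 0 :=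
    (Submodule.Quotient.mk_eq_zero _).2 ⟨x, rfl⟩
  rw [hz, map_zero]

lemma resQuot_ker (C : ChainComplex (ModuleCat.{0} R) ℤ) (M : ModuleCat.{0} R)
    (e : M ≃ₗ[R] ((C.X 0) ⧸ LinearMap.range ((C.d 1 0).hom : C.X 1 →ₗ[R] C.X 0))) :
    LinearMap.ker ((resQuot C M e).hom : ↥(C.X 0) →ₗ[R] ↥M)
      = LinearMap.range ((C.d 1 0).hom : C.X 1 →ₗ[R] C.X 0) := by
  show LinearMap.ker (e.symm.toLinearMap.comp
      (LinearMap.range ((C.d 1 0).hom : C.X 1 →ₗ[R] C.X 0)).mkQ) = _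
  rw [LinearMap.ker_comp, LinearEquiv.ker, Submodule.comap_bot, Submodule.ker_mkQ]

lemma resQuot_surjective (C : ChainComplex (ModuleCat.{0} R) ℤ) (M : ModuleCat.{0} R)
    (e : M ≃ₗ[R] ((C.X 0) ⧸ LinearMap.range ((C.d 1 0).hom : C.X 1 →ₗ[R] C.X 0))) :
    Function.Surjective (resQuot C M e) :=
  e.symm.surjective.comp (Submodule.mkQ_surjective (LinearMap.range ((C.d 1 0).hom : C.X 1 →ₗ[R] C.X 0)))

noncomputable def resPi (C : ChainComplex (ModuleCat.{0} R) ℤ) (M : ModuleCat.{0} R)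
    (e : M ≃ₗ[R] ((C.X 0) ⧸ LinearMap.range ((C.d 1 0).hom : C.X 1 →ₗ[R] C.X 0))) :
    resComplex C ⟶ (ChainComplex.single₀ (ModuleCat.{0} R)).obj M :=
  (ChainComplex.toSingle₀Equiv _ _).symm ⟨resQuot C M e, resQuot_comp C M e⟩

lemma resPi_f_zero (C : ChainComplex (ModuleCat.{0} R) ℤ) (M : ModuleCat.{0} R)
    (e : M ≃ₗ[R] ((C.X 0) ⧸ LinearMap.range ((C.d 1 0).hom : C.X 1 →ₗ[R] C.X 0))) :
    (resPi C M e).f 0 = resQuot C M e :=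
  ChainComplex.toSingle₀Equiv_symm_apply_f_zero _ _

noncomputable def resolutionOf (C : ChainComplex (ModuleCat.{0} R) ℤ)
    (hex : ∀ n : ℤ, C.ExactAt n) (hproj : ∀ n : ℤ, Module.Projective R (C.X n))
    (M : ModuleCat.{0} R)
    (e : M ≃ₗ[R] ((C.X 0) ⧸ LinearMap.range ((C.d 1 0).hom : C.X 1 →ₗ[R] C.X 0))) :
    ProjectiveResolution M where
  complex := resComplex C
  projective n := by
    have h := (IsProjective.iff_projective _).1 (hproj n)
    exact h
  π := resPi C M e
  quasiIso := ⟨fun n => by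
    cases n with
    | zero =>
      rw [ChainComplex.quasiIsoAt₀_iff, ShortComplex.quasiIso_iff_of_zeros']
      · have hτ : ((HomologicalComplex.shortComplexFunctor' (ModuleCat R)
            (ComplexShape.down ℕ) 1 0 0).map (resPi C M e)).τ₂ = (resPi C M e).f 0 := rfl
        refine ⟨?_, ?_⟩
        · rw [ShortComplex.moduleCat_exact_iff_range_eq_ker]
          show LinearMap.range ((resComplex C).d 1 0).hom
            = LinearMap.ker (((HomologicalComplex.shortComplexFunctor' (ModuleCat R)
                (ComplexShape.down ℕ) 1 0 0).map (resPi C M e)).τ₂.hom)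
          rw [hτ, resPi_f_zero]
          erw [resQuot_ker]
          have h10 : (resComplex C).d 1 0 = (C.d 1 0 : C.X 1 ⟶ C.X 0) := resComplex_d C 0
          rw [h10]
          rfl
        · rw [hτ, resPi_f_zero]
          exact (ModuleCat.epi_iff_surjective _).2 (resQuot_surjective C M e)
      · exact (resComplex C).shape 0 0 (by decide)
      · rfl
      · rfl
    | succ n =>
      rw [quasiIsoAt_iff_exactAt']
      · exact resComplex_exactAt C hex n
      · apply ChainComplex.exactAt_succ_single_obj⟩

end Resolution

/-- If `M` is a Gorenstein projective `R`-module, then `Ext^m_R(M, T) = 0` for all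
`m > 0` and all `R`-modules `T` of finite injective dimension. -/
theorem ext_vanishes_of_gorensteinProjective_of_finInjDim
    (R : Type) [Ring R] (M T : ModuleCat.{0} R)
    (hM : IsGorensteinProjective R M) (hT : HasFinInjDim R T)
    (m : ℕ) (hm : 0 < m) :
    Subsingleton (((Ext ℤ (ModuleCat.{0} R) m).obj (Opposite.op M)).obj T) := by
  obtain ⟨C, hex, hproj, ⟨e⟩, -⟩ := hM
  obtain ⟨k, rfl⟩ : ∃ k, m = k + 1 := ⟨m - 1, by omega⟩
  let P := resolutionOf C hex hproj M e
  have hEP : ExtensionProp R ↥T := extensionProp_of_hasFinInjDim ↥T hT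
  have hzero : IsZero ((P.complex.linearYonedaObj ℤ T).homology (k+1)) := by
    rw [← HomologicalComplex.exactAt_iff_isZero_homology]
    rw [HomologicalComplex.exactAt_iff' _ k (k+1) (k+1+1) (by simp) (by simp)]
    rw [ShortComplex.moduleCat_exact_iff]
    intro x₂ hx₂
    have hd2 : (resComplex C).d (k+1+1) (k+1)
        = (C.d ((k+1+1 : ℕ) : ℤ) ((k+1 : ℕ) : ℤ) : C.X ((k+1+1:ℕ):ℤ) ⟶ C.X ((k+1:ℕ):ℤ)) :=
      resComplex_d C (k+1)
    have hcomp : (resComplex C).d (k+1+1) (k+1) ≫ (x₂ : (resComplex C).X (k+1) ⟶ T) = 0 :=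
      hx₂
    rw [hd2] at hcomp
    have hcond : (x₂.hom : ↥(C.X ((k+1:ℕ):ℤ)) →ₗ[R] ↥T).comp
        ((C.d ((k+1+1:ℕ):ℤ) ((k+1:ℕ):ℤ)).hom : C.X ((k+1+1:ℕ):ℤ) →ₗ[R] C.X ((k+1:ℕ):ℤ)) = 0 :=
      congrArg ModuleCat.Hom.hom hcomp
    obtain ⟨g, hg⟩ := hEP C hex hproj ((k+1+1:ℕ):ℤ) ((k+1:ℕ):ℤ) ((k:ℕ):ℤ)
      (by push_cast; ring) (by push_cast; ring) x₂.hom hcond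
    refine ⟨ModuleCat.ofHom g, ?_⟩
    show (resComplex C).d (k+1) k ≫ (ModuleCat.ofHom g : (resComplex C).X k ⟶ T) = x₂
    rw [resComplex_d C k]
    apply ModuleCat.hom_ext
    exact hg
  exact @Subsingleton.intro _ (fun a b => by
    haveI := subsingleton_of_isZero' (hzero.of_iso (P.isoExt (k+1) T))
    exact Subsingleton.elim a b)
end

section
/- If N is a Gorenstein injective R-module, then Ext^m_R(T, N) = 0 for all m > 0 and all R-modules T of finite projective dimension or finite injective dimension. -/
open CategoryTheory Limits

section GIAux

variable {R : Type} [Ring R]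

lemma gi_subsingleton_of_isZero {S : Type} [Ring S] {M : ModuleCat.{0} S} (h : IsZero M) :
    Subsingleton M := by
  refine ⟨fun a b => ?_⟩
  have h1 : (𝟙 M : M ⟶ M) = 0 := h.eq_of_src _ _
  have e : ∀ x : M, x = 0 := fun x => by
    conv_lhs => rw [show x = (𝟙 M : M ⟶ M) x from rfl, h1]
    rfl
  rw [e a, e b]

/-- The key lifting predicate: every map `M → C.X j` killed by all differentials
lifts through `C.d (j+1) j`. -/
def GoodLift (C : ChainComplex (ModuleCat.{0} R) ℤ) (M : Type)
    [AddCommGroup M] [Module R M] : Prop :=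
  ∀ (j j' : ℤ), j' = j + 1 → ∀ f : M →ₗ[R] C.X j,
    (∀ i : ℤ, ((C.d j i).hom : C.X j →ₗ[R] C.X i).comp f = 0) →
    ∃ g : M →ₗ[R] C.X j', ((C.d j' j).hom : C.X j' →ₗ[R] C.X j).comp g = f

variable {C : ChainComplex (ModuleCat.{0} R) ℤ}

lemma gi_d_d_apply (D : ChainComplex (ModuleCat.{0} R) ℤ) (a b c : ℤ) (x : D.X a) :
    ((D.d b c).hom : D.X b →ₗ[R] D.X c) (((D.d a b).hom : D.X a →ₗ[R] D.X b) x) = 0 := by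
  have h : ((D.d b c).hom : D.X b →ₗ[R] D.X c).comp ((D.d a b).hom : D.X a →ₗ[R] D.X b) = 0 := by
    rw [← ModuleCat.hom_comp, D.d_comp_d, ModuleCat.hom_zero]
  exact LinearMap.congr_fun h x

lemma gi_comp_d_all (D : ChainComplex (ModuleCat.{0} R) ℤ) {M : Type} [AddCommGroup M]
    [Module R M] {j jp : ℤ} (hjp : jp + 1 = j) (f : M →ₗ[R] D.X j)
    (h : ((D.d j jp).hom : D.X j →ₗ[R] D.X jp).comp f = 0) (i : ℤ) :
    ((D.d j i).hom : D.X j →ₗ[R] D.X i).comp f = 0 := by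
  by_cases hi : i = jp
  · subst hi; exact h
  · have hz : D.d j i = 0 := D.shape j i (by
      intro hrel
      exact hi (by simp only [ComplexShape.down_Rel] at hrel; omega))
    rw [hz]
    ext x
    rfl

lemma gi_dsurj {D : ChainComplex (ModuleCat.{0} R) ℤ} (hDe : ∀ i, D.ExactAt i)
    {a b c : ℤ} (hab : a = b + 1) (hbc : c = b - 1) (x : D.X b)
    (hx : ((D.d b c).hom : D.X b →ₗ[R] D.X c) x = 0) :
    ∃ y : D.X a, ((D.d a b).hom : D.X a →ₗ[R] D.X b) y = x := by
  subst hab; subst hbc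
  have h := hDe b
  rw [D.exactAt_iff' (b+1) b (b-1) (by simp) (by simp)] at h
  exact (ShortComplex.moduleCat_exact_iff _).1 h x hx

lemma goodLift_congr {M M' : Type} [AddCommGroup M] [Module R M] [AddCommGroup M']
    [Module R M'] (e : M' ≃ₗ[R] M) (h : GoodLift C M) : GoodLift C M' := by
  intro j j' hj f hf
  obtain ⟨g, hg⟩ := h j j' hj (f.comp (e.symm : M →ₗ[R] M')) (fun i => by
    ext x
    simpa using LinearMap.congr_fun (hf i) (e.symm x))
  refine ⟨g.comp (e : M' →ₗ[R] M), ?_⟩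
  ext x
  simpa using LinearMap.congr_fun hg (e x)

lemma goodLift_of_subsingleton {M : Type} [AddCommGroup M] [Module R M] [Subsingleton M] :
    GoodLift C M := by
  intro j j' hj f hf
  refine ⟨0, ?_⟩
  ext x
  rw [Subsingleton.elim x 0]
  simp

/-- factor a linear map through a surjection whose kernel it kills -/
lemma gi_factor {A B X : Type} [AddCommGroup A] [Module R A] [AddCommGroup B] [Module R B]
    [AddCommGroup X] [Module R X] (p : A →ₗ[R] B) (hp : Function.Surjective p)
    (f : A →ₗ[R] X) (h : LinearMap.ker p ≤ LinearMap.ker f) :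
    ∃ g : B →ₗ[R] X, g.comp p = f := by
  refine ⟨((LinearMap.ker p).liftQ f h).comp
    ((p.quotKerEquivOfSurjective hp).symm : B →ₗ[R] A ⧸ LinearMap.ker p), ?_⟩
  ext a
  have h1 : (p.quotKerEquivOfSurjective hp).symm (p a) = Submodule.Quotient.mk a := by
    rw [LinearEquiv.symm_apply_eq]
    rfl
  have h2 := congrArg ((LinearMap.ker p).liftQ f h) h1
  simp only [Submodule.liftQ_apply] at h2
  simpa using h2


/-- If `0 → ker p → Q → T → 0` with `Q` projective and `GoodLift (ker p)`, then `GoodLift T`. -/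
lemma goodLift_of_proj_ses (hexact : ∀ i, C.ExactAt i)
    (hinj : ∀ n : ℤ, Module.Injective R (C.X n))
    {Q T : Type} [AddCommGroup Q] [Module R Q] [AddCommGroup T] [Module R T]
    (hQ : Module.Projective R Q) (p : Q →ₗ[R] T) (hp : Function.Surjective p)
    (hker : GoodLift C ↥(LinearMap.ker p)) : GoodLift C T := by
  intro j j' hj f hf
  subst hj
  set K := LinearMap.ker ((C.d j (j-1)).hom : C.X j →ₗ[R] C.X (j-1)) with hK
  set q := ((C.d (j+1) j).hom : C.X (j+1) →ₗ[R] C.X j).codRestrict K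
    (fun y => gi_d_d_apply C (j+1) j (j-1) y) with hq
  have hqsurj : Function.Surjective q := by
    rintro ⟨x, hx⟩
    obtain ⟨y, hy⟩ := gi_dsurj hexact rfl rfl x hx
    exact ⟨y, Subtype.ext hy⟩
  have hfpK : ∀ x : Q, ((C.d j (j-1)).hom : C.X j →ₗ[R] C.X (j-1)) ((f.comp p) x) = 0 :=
    fun x => LinearMap.congr_fun (hf (j-1)) (p x)
  obtain ⟨h, hh⟩ := Module.projective_lifting_property q ((f.comp p).codRestrict K hfpK) hqsurj
  have hh' : ∀ x : Q, ((C.d (j+1) j).hom : C.X (j+1) →ₗ[R] C.X j) (h x) = f (p x) := by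
    intro x
    have := LinearMap.congr_fun hh x
    exact congrArg Subtype.val this
  -- restrict h to ker p
  set h' := h.comp (LinearMap.ker p).subtype with hh'def
  have hcond : ∀ i, ((C.d (j+1) i).hom : C.X (j+1) →ₗ[R] C.X i).comp h' = 0 := by
    apply gi_comp_d_all C rfl
    ext x
    have h0 := hh' ((LinearMap.ker p).subtype x)
    simp only [LinearMap.comp_apply, LinearMap.zero_apply, hh'def]
    rw [h0]
    have : p ((LinearMap.ker p).subtype x) = 0 := x.2
    rw [this, map_zero]
  obtain ⟨v, hv⟩ := hker (j+1) (j+1+1) rfl h' hcond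
  obtain ⟨w, hw⟩ := (hinj (j+1+1)).out (LinearMap.ker p).subtype
    (Submodule.injective_subtype _) v
  set h₂ := h - ((C.d (j+1+1) (j+1)).hom : C.X (j+1+1) →ₗ[R] C.X (j+1)).comp w with hh₂
  have hker₂ : LinearMap.ker p ≤ LinearMap.ker h₂ := by
    intro x hx
    have hx' : x = (LinearMap.ker p).subtype ⟨x, hx⟩ := rfl
    simp only [LinearMap.mem_ker, hh₂, LinearMap.sub_apply, LinearMap.comp_apply]
    rw [hx', hw ⟨x, hx⟩]
    have := LinearMap.congr_fun hv ⟨x, hx⟩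
    simp only [LinearMap.comp_apply] at this
    rw [this]
    simp [hh'def, ← hx']
  obtain ⟨g, hg⟩ := gi_factor p hp h₂ hker₂
  refine ⟨g, ?_⟩
  ext t
  obtain ⟨x, rfl⟩ := hp t
  have h3 : g (p x) = h₂ x := LinearMap.congr_fun hg x
  simp only [LinearMap.comp_apply]
  rw [h3, hh₂]
  simp only [LinearMap.sub_apply, LinearMap.comp_apply, map_sub]
  rw [hh' x, gi_d_d_apply C (j+1+1) (j+1) j (w x), sub_zero]

/-- If `0 → T → I → I ⧸ range ι → 0` with `GoodLift I` and `GoodLift` of the quotient,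
then `GoodLift T`. -/
lemma goodLift_of_inj_ses (hinj : ∀ n : ℤ, Module.Injective R (C.X n))
    {T I : Type} [AddCommGroup T] [Module R T] [AddCommGroup I] [Module R I]
    (ι : T →ₗ[R] I) (hι : Function.Injective ι) (hGI : GoodLift C I)
    (hquot : GoodLift C (I ⧸ LinearMap.range ι)) : GoodLift C T := by
  intro j j' hj f hf
  subst hj
  obtain ⟨h, hh⟩ := (hinj j).out ι hι f
  have hkerU : LinearMap.range ι ≤
      LinearMap.ker (((C.d j (j-1)).hom : C.X j →ₗ[R] C.X (j-1)).comp h) := by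
    rintro _ ⟨t, rfl⟩
    simp only [LinearMap.mem_ker, LinearMap.comp_apply]
    rw [hh t]
    exact LinearMap.congr_fun (hf (j-1)) t
  set u := (LinearMap.range ι).liftQ
    (((C.d j (j-1)).hom : C.X j →ₗ[R] C.X (j-1)).comp h) hkerU with hudef
  have hu : ∀ x : I, u (Submodule.Quotient.mk x)
      = ((C.d j (j-1)).hom : C.X j →ₗ[R] C.X (j-1)) (h x) := fun x => rfl
  have hucond : ∀ i, ((C.d (j-1) i).hom : C.X (j-1) →ₗ[R] C.X i).comp u = 0 := by
    intro i
    ext x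
    simp only [LinearMap.comp_apply, LinearMap.zero_apply, Submodule.mkQ_apply]
    rw [hu x, gi_d_d_apply C j (j-1) i (h x)]
  obtain ⟨v, hv⟩ := hquot (j-1) j (by omega) u hucond
  set h₂ := h - v.comp (LinearMap.range ι).mkQ with hh₂
  have h₂cond : ∀ i, ((C.d j i).hom : C.X j →ₗ[R] C.X i).comp h₂ = 0 := by
    apply gi_comp_d_all C (jp := j-1) (by omega)
    ext x
    simp only [LinearMap.comp_apply, LinearMap.zero_apply, hh₂, LinearMap.sub_apply, map_sub]
    have h1 := LinearMap.congr_fun hv ((LinearMap.range ι).mkQ x)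
    simp only [LinearMap.comp_apply] at h1
    rw [h1]
    have h2 : (LinearMap.range ι).mkQ x = Submodule.Quotient.mk x := rfl
    rw [h2, hu x, sub_self]
  obtain ⟨g', hg'⟩ := hGI j (j+1) rfl h₂ h₂cond
  refine ⟨g'.comp ι, ?_⟩
  ext t
  have h1 := LinearMap.congr_fun hg' (ι t)
  simp only [LinearMap.comp_apply] at h1 ⊢
  rw [h1, hh₂]
  simp only [LinearMap.sub_apply, LinearMap.comp_apply]
  have h2 : (LinearMap.range ι).mkQ (ι t) = 0 := by
    simp [Submodule.mkQ_apply, Submodule.Quotient.mk_eq_zero]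
  rw [h2, map_zero, sub_zero, hh t]


lemma goodLift_step_proj (hexact : ∀ i, C.ExactAt i)
    (hinj : ∀ n : ℤ, Module.Injective R (C.X n))
    {D : ChainComplex (ModuleCat.{0} R) ℤ} (hDe : ∀ i, D.ExactAt i) {i : ℤ}
    (hp : Module.Projective R (D.X i))
    (IH : GoodLift C ↥(LinearMap.ker ((D.d i (i-1)).hom : D.X i →ₗ[R] D.X (i-1)))) :
    GoodLift C ↥(LinearMap.ker ((D.d (i-1) (i-1-1)).hom : D.X (i-1) →ₗ[R] D.X (i-1-1))) := by
  set K := LinearMap.ker ((D.d (i-1) (i-1-1)).hom : D.X (i-1) →ₗ[R] D.X (i-1-1)) with hKdef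
  set p := ((D.d i (i-1)).hom : D.X i →ₗ[R] D.X (i-1)).codRestrict K
    (fun y => gi_d_d_apply D i (i-1) (i-1-1) y) with hpdef
  have hpsurj : Function.Surjective p := by
    rintro ⟨x, hx⟩
    obtain ⟨y, hy⟩ := gi_dsurj (a := i) (b := i-1) (c := i-1-1) hDe (by omega) rfl x hx
    exact ⟨y, Subtype.ext hy⟩
  have hkp : LinearMap.ker p = LinearMap.ker ((D.d i (i-1)).hom : D.X i →ₗ[R] D.X (i-1)) :=
    LinearMap.ker_codRestrict _ _ _
  exact goodLift_of_proj_ses hexact hinj hp p hpsurj (by rw [hkp]; exact IH)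

lemma goodLift_step_inj (hinj : ∀ n : ℤ, Module.Injective R (C.X n))
    {D : ChainComplex (ModuleCat.{0} R) ℤ} (hDe : ∀ i, D.ExactAt i) {i : ℤ}
    (hGI : GoodLift C (D.X i))
    (IH : GoodLift C ↥(LinearMap.range ((D.d i (i-1)).hom : D.X i →ₗ[R] D.X (i-1)))) :
    GoodLift C ↥(LinearMap.range ((D.d (i+1) i).hom : D.X (i+1) →ₗ[R] D.X i)) := by
  apply goodLift_of_inj_ses hinj
    (LinearMap.range ((D.d (i+1) i).hom : D.X (i+1) →ₗ[R] D.X i)).subtype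
    (Submodule.injective_subtype _) hGI
  have hrs : LinearMap.range (LinearMap.range
      ((D.d (i+1) i).hom : D.X (i+1) →ₗ[R] D.X i)).subtype
      = LinearMap.range ((D.d (i+1) i).hom : D.X (i+1) →ₗ[R] D.X i) :=
    Submodule.range_subtype _
  rw [hrs]
  have hrk : LinearMap.range ((D.d (i+1) i).hom : D.X (i+1) →ₗ[R] D.X i)
      = LinearMap.ker ((D.d i (i-1)).hom : D.X i →ₗ[R] D.X (i-1)) := by
    ext x
    constructor
    · rintro ⟨y, rfl⟩
      exact gi_d_d_apply D (i+1) i (i-1) y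
    · intro hx
      obtain ⟨y, hy⟩ := gi_dsurj hDe rfl rfl x hx
      exact ⟨y, hy⟩
  rw [hrk]
  exact goodLift_congr
    (LinearMap.quotKerEquivRange ((D.d i (i-1)).hom : D.X i →ₗ[R] D.X (i-1))) IH

lemma goodLift_of_hasProjDimLE (hexact : ∀ i, C.ExactAt i)
    (hinj : ∀ n : ℤ, Module.Injective R (C.X n))
    {M : Type} [AddCommGroup M] [Module R M] {n : ℕ} (hM : HasProjDimLE R M n) :
    GoodLift C M := by
  obtain ⟨D, hDe, ⟨e⟩, hproj, hzero⟩ := hM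
  have key : ∀ k : ℕ, GoodLift C
      ↥(LinearMap.ker ((D.d ((n:ℤ)-k) ((n:ℤ)-k-1)).hom : D.X ((n:ℤ)-k) →ₗ[R] D.X ((n:ℤ)-k-1))) := by
    intro k
    induction k with
    | zero =>
      rw [show ((n:ℤ)-((0:ℕ):ℤ)) = (n:ℤ) by push_cast; ring]
      have hz : Subsingleton (D.X ((n:ℤ)+1)) :=
        gi_subsingleton_of_isZero (hzero _ (Or.inr (by omega)))
      have : Subsingleton
          ↥(LinearMap.ker ((D.d (n:ℤ) ((n:ℤ)-1)).hom : D.X (n:ℤ) →ₗ[R] D.X ((n:ℤ)-1))) := by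
        refine ⟨fun a b => Subtype.ext ?_⟩
        have ha : ∀ y : ↥(LinearMap.ker ((D.d (n:ℤ) ((n:ℤ)-1)).hom :
            D.X (n:ℤ) →ₗ[R] D.X ((n:ℤ)-1))), (y : D.X (n:ℤ)) = 0 := by
          rintro ⟨x, hx⟩
          obtain ⟨y, hy⟩ := gi_dsurj hDe rfl rfl x hx
          show x = 0
          rw [← hy, Subsingleton.elim y 0, map_zero]
        rw [ha a, ha b]
      exact goodLift_of_subsingleton
    | succ k IH =>
      by_cases hc : (n:ℤ) - k ≤ -1
      · have hz : Subsingleton (D.X ((n:ℤ)-((k:ℕ)+1:ℕ))) :=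
          gi_subsingleton_of_isZero (hzero _ (Or.inl (by push_cast; omega)))
        have : Subsingleton ↥(LinearMap.ker
            ((D.d ((n:ℤ)-((k:ℕ)+1:ℕ)) ((n:ℤ)-((k:ℕ)+1:ℕ)-1)).hom :
            D.X ((n:ℤ)-((k:ℕ)+1:ℕ)) →ₗ[R] D.X ((n:ℤ)-((k:ℕ)+1:ℕ)-1))) := by
          refine ⟨fun a b => Subtype.ext ?_⟩
          rw [Subsingleton.elim (a : D.X ((n:ℤ)-((k:ℕ)+1:ℕ))) 0,
            Subsingleton.elim (b : D.X ((n:ℤ)-((k:ℕ)+1:ℕ))) 0]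
        exact goodLift_of_subsingleton
      · rw [show ((n:ℤ)-(((k:ℕ)+1:ℕ):ℤ)) = ((n:ℤ)-k)-1 by push_cast; ring]
        exact goodLift_step_proj hexact hinj hDe (hproj _ (by omega)) IH
  have final := key (n+1)
  rw [show ((n:ℤ)-(((n:ℕ)+1:ℕ):ℤ)) = (-1:ℤ) by push_cast; ring] at final
  have hz2 : Subsingleton (D.X ((-1:ℤ)-1)) :=
    gi_subsingleton_of_isZero (hzero _ (Or.inl (by omega)))
  have hktop : LinearMap.ker ((D.d (-1:ℤ) ((-1:ℤ)-1)).hom : D.X (-1:ℤ) →ₗ[R] D.X ((-1:ℤ)-1)) = ⊤ :=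
    Submodule.eq_top_iff'.2 (fun x => Subsingleton.elim _ 0)
  have eK : ↥(LinearMap.ker ((D.d (-1:ℤ) ((-1:ℤ)-1)).hom :
      D.X (-1:ℤ) →ₗ[R] D.X ((-1:ℤ)-1))) ≃ₗ[R] D.X (-1:ℤ) :=
    (LinearEquiv.ofEq _ _ hktop).trans (Submodule.topEquiv)
  exact goodLift_congr (e.trans eK.symm) final

lemma goodLift_of_hasInjDimLE
    (hJ : ∀ (J : Type) (_ : AddCommGroup J) (_ : Module R J),
      Module.Injective R J → GoodLift C J)
    (hinj : ∀ n : ℤ, Module.Injective R (C.X n))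
    {M : Type} [AddCommGroup M] [Module R M] {n : ℕ} (hM : HasInjDimLE R M n) :
    GoodLift C M := by
  obtain ⟨D, hDe, ⟨e⟩, hinjD, hzero⟩ := hM
  have key : ∀ k : ℕ, (-(n:ℤ)-1+k ≤ 0) → GoodLift C
      ↥(LinearMap.range ((D.d ((-(n:ℤ)-1+k)+1) (-(n:ℤ)-1+k)).hom :
        D.X ((-(n:ℤ)-1+k)+1) →ₗ[R] D.X (-(n:ℤ)-1+k))) := by
    intro k
    induction k with
    | zero =>
      intro _
      have hz : Subsingleton (D.X (-(n:ℤ)-1+((0:ℕ):ℤ))) :=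
        gi_subsingleton_of_isZero (hzero _ (Or.inr (by push_cast; omega)))
      have : Subsingleton ↥(LinearMap.range
          ((D.d ((-(n:ℤ)-1+((0:ℕ):ℤ))+1) (-(n:ℤ)-1+((0:ℕ):ℤ))).hom :
          D.X ((-(n:ℤ)-1+((0:ℕ):ℤ))+1) →ₗ[R] D.X (-(n:ℤ)-1+((0:ℕ):ℤ)))) := by
        refine ⟨fun a b => Subtype.ext ?_⟩
        rw [Subsingleton.elim (a : D.X (-(n:ℤ)-1+((0:ℕ):ℤ))) 0,
          Subsingleton.elim (b : D.X (-(n:ℤ)-1+((0:ℕ):ℤ))) 0]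
      exact goodLift_of_subsingleton
    | succ k IH =>
      intro hb
      have hb' : -(n:ℤ)-1+k ≤ 0 := by push_cast at hb ⊢; omega
      rw [show (-(n:ℤ)-1+(((k:ℕ)+1:ℕ):ℤ)) = ((-(n:ℤ)-1+k)+1) by push_cast; ring]
      have hIle : (-(n:ℤ)-1+k)+1 ≤ 0 := by push_cast at hb; omega
      apply goodLift_step_inj hinj hDe
        (hJ _ _ _ (hinjD _ hIle))
      have IH' := IH hb'
      rw [show ((-(n:ℤ)-1+k)+1-1) = (-(n:ℤ)-1+k) by ring]
      exact IH'
  have final := key (n+1) (by push_cast; omega)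
  rw [show (-(n:ℤ)-1+(((n:ℕ)+1:ℕ):ℤ)) = (0:ℤ) by push_cast; ring] at final
  have hd1inj : Function.Injective
      ((D.d ((0:ℤ)+1) 0).hom : D.X ((0:ℤ)+1) →ₗ[R] D.X (0:ℤ)) := by
    intro x y hxy
    have hsub : ((D.d ((0:ℤ)+1) 0).hom : D.X ((0:ℤ)+1) →ₗ[R] D.X (0:ℤ)) (x - y) = 0 := by
      rw [map_sub, hxy, sub_self]
    have hz : Subsingleton (D.X (((0:ℤ)+1)+1)) :=
      gi_subsingleton_of_isZero (hzero _ (Or.inl (by omega)))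
    obtain ⟨z, hz'⟩ := gi_dsurj hDe rfl (by omega) (x - y) hsub
    rw [Subsingleton.elim z 0, map_zero] at hz'
    have := hz'.symm
    rwa [sub_eq_zero] at this
  have eT : M ≃ₗ[R] ↥(LinearMap.range
      ((D.d ((0:ℤ)+1) 0).hom : D.X ((0:ℤ)+1) →ₗ[R] D.X (0:ℤ))) :=
    e.trans (LinearEquiv.ofInjective
      ((D.d ((0:ℤ)+1) 0).hom : D.X ((0:ℤ)+1) →ₗ[R] D.X (0:ℤ)) hd1inj)
  exact goodLift_congr eT final


section Resolution

variable {T N : ModuleCat.{0} R} (P : ProjectiveResolution T)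

lemma gi_P_exact (k : ℕ) (x : P.complex.X (k+1))
    (hx : ((P.complex.d (k+1) k).hom : P.complex.X (k+1) →ₗ[R] P.complex.X k) x = 0) :
    ∃ y, ((P.complex.d (k+2) (k+1)).hom : P.complex.X (k+2) →ₗ[R] P.complex.X (k+1)) y = x := by
  have h := P.complex_exactAt_succ k
  rw [P.complex.exactAt_iff' (k+2) (k+1) k (by simp) (by simp)] at h
  exact (ShortComplex.moduleCat_exact_iff _).1 h x hx

lemma gi_injExtend (k : ℕ) {X : Type} [AddCommGroup X] [Module R X]
    (hX : Module.Injective R X) (f : P.complex.X (k+1) →ₗ[R] X)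
    (hf : f.comp ((P.complex.d (k+2) (k+1)).hom : P.complex.X (k+2) →ₗ[R] P.complex.X (k+1)) = 0) :
    ∃ h : P.complex.X k →ₗ[R] X,
      h.comp ((P.complex.d (k+1) k).hom : P.complex.X (k+1) →ₗ[R] P.complex.X k) = f := by
  set dP := ((P.complex.d (k+1) k).hom : P.complex.X (k+1) →ₗ[R] P.complex.X k) with hdP
  have hker : LinearMap.ker dP ≤ LinearMap.ker f := by
    intro x hx
    obtain ⟨y, hy⟩ := gi_P_exact P k x hx
    rw [LinearMap.mem_ker, ← hy]
    exact LinearMap.congr_fun hf y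
  set e := dP.quotKerEquivRange with hedef
  set φ := ((LinearMap.ker dP).liftQ f hker).comp
    (e.symm : ↥(LinearMap.range dP) →ₗ[R] P.complex.X (k+1) ⧸ LinearMap.ker dP) with hφ
  obtain ⟨h, hh⟩ := hX.out (LinearMap.range dP).subtype (Submodule.injective_subtype _) φ
  refine ⟨h, ?_⟩
  ext x
  have h1 : dP x = (LinearMap.range dP).subtype ⟨dP x, LinearMap.mem_range_self _ x⟩ := rfl
  simp only [LinearMap.comp_apply]
  rw [show ((P.complex.d (k+1) k).hom : P.complex.X (k+1) →ₗ[R] P.complex.X k) x = dP x from rfl,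
    h1, hh]
  have h2 : e (Submodule.Quotient.mk x) = ⟨dP x, LinearMap.mem_range_self _ x⟩ :=
    Subtype.ext (dP.quotKerEquivRange_apply_mk x)
  have h3 : e.symm ⟨dP x, LinearMap.mem_range_self _ x⟩ = Submodule.Quotient.mk x := by
    rw [LinearEquiv.symm_apply_eq, h2]
  simp only [hφ, LinearMap.comp_apply, LinearMap.coe_coe]
  have h4 := congrArg ((LinearMap.ker dP).liftQ f hker) h3
  simp only [Submodule.liftQ_apply] at h4
  simpa using h4

lemma gi_P_projective (k : ℕ) : Module.Projective R (P.complex.X k) :=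
  by haveI := P.projective k; exact ModuleCat.projective_of_module_projective _

lemma gi_pi_surjective : Function.Surjective ((P.π.f 0).hom : P.complex.X 0 →ₗ[R] T) := by
  rw [← ModuleCat.epi_iff_surjective]
  infer_instance

lemma gi_main (hexact : ∀ i, C.ExactAt i) (hinj : ∀ n : ℤ, Module.Injective R (C.X n))
    (hGT : GoodLift C T) :
    ∀ (k : ℕ) (i j : ℤ), j = i + 1 → ∀ f : P.complex.X (k+1) →ₗ[R] C.X j,
      (∀ l, ((C.d j l).hom : C.X j →ₗ[R] C.X l).comp f = 0) →
      f.comp ((P.complex.d (k+2) (k+1)).hom : P.complex.X (k+2) →ₗ[R] P.complex.X (k+1)) = 0 →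
      ∃ g : P.complex.X k →ₗ[R] C.X j,
        (∀ l, ((C.d j l).hom : C.X j →ₗ[R] C.X l).comp g = 0) ∧
        g.comp ((P.complex.d (k+1) k).hom : P.complex.X (k+1) →ₗ[R] P.complex.X k) = f := by
  intro k
  induction k with
  | zero =>
    intro i j hij f hf hfd
    subst hij
    obtain ⟨h, hh⟩ := gi_injExtend P 0 (hinj (i+1)) f hfd
    set π0 : ↥(P.complex.X 0) →ₗ[R] ↥T := (P.π.f 0).hom with hπ0def
    have hπs : Function.Surjective π0 := gi_pi_surjective P
    set f' := ((C.d (i+1) i).hom : C.X (i+1) →ₗ[R] C.X i).comp h with hf'def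
    have hkerπ : LinearMap.ker π0 ≤ LinearMap.ker f' := by
      intro x hx
      have hx0 : π0 x = 0 := hx
      obtain ⟨y, hy⟩ := (ShortComplex.moduleCat_exact_iff _).1 P.exact₀ x hx0
      rw [LinearMap.mem_ker, hf'def, LinearMap.comp_apply, ← hy]
      have h5 : h (((P.complex.d 1 0).hom : P.complex.X 1 →ₗ[R] P.complex.X 0) y) = f y :=
        LinearMap.congr_fun hh y
      rw [h5]
      exact LinearMap.congr_fun (hf i) y
    obtain ⟨u, hu⟩ := gi_factor π0 hπs f' hkerπ
    have hucond : ∀ l, ((C.d i l).hom : C.X i →ₗ[R] C.X l).comp u = 0 := by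
      intro l
      ext b
      obtain ⟨x, rfl⟩ := hπs b
      have h6 : u (π0 x) = f' x := LinearMap.congr_fun hu x
      simp only [LinearMap.comp_apply, LinearMap.zero_apply]
      rw [h6, hf'def, LinearMap.comp_apply, gi_d_d_apply C (i+1) i l (h x)]
    obtain ⟨v, hv⟩ := hGT i (i+1) rfl u hucond
    refine ⟨h - v.comp π0, ?_, ?_⟩
    · apply gi_comp_d_all C (jp := i) rfl
      ext x
      simp only [LinearMap.comp_apply, LinearMap.sub_apply, LinearMap.zero_apply, map_sub]
      have h7 := LinearMap.congr_fun hv (π0 x)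
      simp only [LinearMap.comp_apply] at h7
      rw [h7]
      have h8 : u (π0 x) = f' x := LinearMap.congr_fun hu x
      rw [h8, hf'def, LinearMap.comp_apply, sub_self]
    · ext x
      simp only [LinearMap.comp_apply, LinearMap.sub_apply]
      have h9 : π0 (((P.complex.d (0+1) 0).hom : P.complex.X (0+1) →ₗ[R] P.complex.X 0) x) = 0 := by
        have h10 : (P.complex.d 1 0 ≫ P.π.f 0) x = 0 := by
          rw [P.complex_d_comp_π_f_zero]
          rfl
        exact h10
      rw [h9, map_zero, sub_zero]
      exact LinearMap.congr_fun hh x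
  | succ k IH =>
    intro i j hij f hf hfd
    subst hij
    obtain ⟨h, hh⟩ := gi_injExtend P (k+1) (hinj (i+1)) f hfd
    set f' := ((C.d (i+1) i).hom : C.X (i+1) →ₗ[R] C.X i).comp h with hf'def
    have hf'cond : ∀ l, ((C.d i l).hom : C.X i →ₗ[R] C.X l).comp f' = 0 := by
      intro l
      ext x
      simp only [LinearMap.comp_apply, LinearMap.zero_apply, hf'def]
      exact gi_d_d_apply C (i+1) i l (h x)
    have hf'd : f'.comp
        ((P.complex.d (k+2) (k+1)).hom : P.complex.X (k+2) →ₗ[R] P.complex.X (k+1)) = 0 := by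
      ext x
      simp only [LinearMap.comp_apply, LinearMap.zero_apply, hf'def]
      have h5 : h (((P.complex.d (k+2) (k+1)).hom :
          P.complex.X (k+2) →ₗ[R] P.complex.X (k+1)) x) = f x := LinearMap.congr_fun hh x
      rw [h5]
      exact LinearMap.congr_fun (hf i) x
    obtain ⟨u, hucond, hud⟩ := IH (i-1) i (by omega) f' hf'cond hf'd
    -- lift u through the surjection C.X (i+1) → ker (C.d i (i-1))
    set K := LinearMap.ker ((C.d i (i-1)).hom : C.X i →ₗ[R] C.X (i-1)) with hK
    set q := ((C.d (i+1) i).hom : C.X (i+1) →ₗ[R] C.X i).codRestrict K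
      (fun y => gi_d_d_apply C (i+1) i (i-1) y) with hq
    have hqsurj : Function.Surjective q := by
      rintro ⟨x, hx⟩
      obtain ⟨y, hy⟩ := gi_dsurj hexact rfl rfl x hx
      exact ⟨y, Subtype.ext hy⟩
    have huK : ∀ x, ((C.d i (i-1)).hom : C.X i →ₗ[R] C.X (i-1)) (u x) = 0 :=
      fun x => LinearMap.congr_fun (hucond (i-1)) x
    have := gi_P_projective P k
    obtain ⟨v, hvq⟩ := Module.projective_lifting_property q (u.codRestrict K huK) hqsurj
    have hv : ∀ x, ((C.d (i+1) i).hom : C.X (i+1) →ₗ[R] C.X i) (v x) = u x := by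
      intro x
      exact congrArg Subtype.val (LinearMap.congr_fun hvq x)
    refine ⟨h - v.comp ((P.complex.d (k+1) k).hom : P.complex.X (k+1) →ₗ[R] P.complex.X k), ?_, ?_⟩
    · apply gi_comp_d_all C (jp := i) rfl
      ext x
      simp only [LinearMap.comp_apply, LinearMap.sub_apply, LinearMap.zero_apply, map_sub]
      rw [hv]
      have h6 := LinearMap.congr_fun hud x
      simp only [LinearMap.comp_apply] at h6
      rw [h6, hf'def, LinearMap.comp_apply, sub_self]
    · ext x
      simp only [LinearMap.comp_apply, LinearMap.sub_apply]
      have h7 : ((P.complex.d (k+1) k).hom : P.complex.X (k+1) →ₗ[R] P.complex.X k)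
          (((P.complex.d (k+2) (k+1)).hom : P.complex.X (k+2) →ₗ[R] P.complex.X (k+1)) x) = 0 := by
        have h8 : (P.complex.d (k+2) (k+1) ≫ P.complex.d (k+1) k) x = 0 := by
          rw [P.complex.d_comp_d]
          rfl
        exact h8
      rw [h7, map_zero, sub_zero]
      exact LinearMap.congr_fun hh x

end Resolution

end GIAux


/-- If `N` is a Gorenstein injective `R`-module, then `Ext^m_R(T, N) = 0` for all
`m > 0` and all `R`-modules `T` of finite projective dimension or finite injective
dimension. -/
theorem ext_vanishes_of_gorensteinInjective
    (R : Type) [Ring R] (N T : ModuleCat.{0} R)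
    (hN : IsGorensteinInjective R N) (hT : HasFinProjDim R T ∨ HasFinInjDim R T)
    (m : ℕ) (hm : 0 < m) :
    Subsingleton (((Ext ℤ (ModuleCat.{0} R) m).obj (Opposite.op T)).obj N) := by
  obtain ⟨C, hexact, hinj, ⟨eN⟩, hlift⟩ := hN
  have hJ : ∀ (J : Type) (_ : AddCommGroup J) (_ : Module R J),
      Module.Injective R J → GoodLift C J := by
    intro J _ _ hJinj j j' hj f hf
    obtain ⟨g, hg⟩ := hlift J _ _ hJinj j f (hf (j-1))
    subst hj
    exact ⟨g, hg⟩
  have hGT : GoodLift C ↥T := by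
    rcases hT with ⟨n, hn⟩ | ⟨n, hn⟩
    · exact goodLift_of_hasProjDimLE hexact hinj hn
    · exact goodLift_of_hasInjDimLE hJ hinj hn
  obtain ⟨k, rfl⟩ : ∃ k, m = k + 1 := ⟨m - 1, by omega⟩
  set P := ProjectiveResolution.of T with hP
  have hexactP : (P.complex.linearYonedaObj ℤ N).ExactAt (k+1) := by
    rw [(P.complex.linearYonedaObj ℤ N).exactAt_iff' k (k+1) (k+2)
      (CochainComplex.prev_nat_succ k) (by simp)]
    rw [ShortComplex.moduleCat_exact_iff]
    intro x hx
    change (P.complex.d (k+2) (k+1) ≫ (x : P.complex.X (k+1) ⟶ N)) = 0 at hx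
    change ∃ x₁ : P.complex.X k ⟶ N, P.complex.d (k+1) k ≫ x₁ = x
    replace hx := congrArg ModuleCat.Hom.hom hx
    change (ModuleCat.Hom.hom (x : P.complex.X (k+1) ⟶ N)).comp (P.complex.d (k+2) (k+1)).hom = 0 at hx
    -- regard x as a linear map
    set x' : ↥(P.complex.X (k+1)) →ₗ[R] ↥N := x.hom with hx'def
    set Kr := LinearMap.ker ((C.d 0 (-1)).hom : C.X 0 →ₗ[R] C.X (-1)) with hKr
    set f : ↥(P.complex.X (k+1)) →ₗ[R] ↥(C.X 0) :=
      Kr.subtype.comp ((eN : ↥N →ₗ[R] ↥Kr).comp x') with hfdef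
    have hf1 : ∀ l, ((C.d 0 l).hom : C.X 0 →ₗ[R] C.X l).comp f = 0 := by
      apply gi_comp_d_all C (jp := (-1:ℤ)) (by norm_num)
      ext p
      simp only [LinearMap.comp_apply, LinearMap.zero_apply, hfdef]
      exact (eN (x' p)).2
    have hf2 : f.comp
        ((P.complex.d (k+2) (k+1)).hom : P.complex.X (k+2) →ₗ[R] P.complex.X (k+1)) = 0 := by
      ext p
      simp only [LinearMap.comp_apply, LinearMap.zero_apply, hfdef]
      have hxp : x' (((P.complex.d (k+2) (k+1)).hom :
          P.complex.X (k+2) →ₗ[R] P.complex.X (k+1)) p) = 0 := LinearMap.congr_fun hx p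
      rw [hxp, map_zero, map_zero]
    obtain ⟨g, hg1, hg2⟩ := gi_main P hexact hinj hGT k (-1) 0 (by norm_num) f hf1 hf2
    have hgK : ∀ p, ((C.d 0 (-1)).hom : C.X 0 →ₗ[R] C.X (-1)) (g p) = 0 :=
      fun p => LinearMap.congr_fun (hg1 (-1)) p
    set y : ↥(P.complex.X k) →ₗ[R] ↥N :=
      (eN.symm : ↥Kr →ₗ[R] ↥N).comp (g.codRestrict Kr hgK) with hydef
    refine ⟨ModuleCat.ofHom y, ?_⟩
    apply ModuleCat.hom_ext
    apply LinearMap.ext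
    intro p
    show y (((P.complex.d (k+1) k).hom : P.complex.X (k+1) →ₗ[R] P.complex.X k) p) = x' p
    have hgp : g (((P.complex.d (k+1) k).hom :
        P.complex.X (k+1) →ₗ[R] P.complex.X k) p) = f p := LinearMap.congr_fun hg2 p
    simp only [hydef, LinearMap.comp_apply, LinearMap.coe_coe]
    have hsub : g.codRestrict Kr hgK (((P.complex.d (k+1) k).hom :
        P.complex.X (k+1) →ₗ[R] P.complex.X k) p) = eN (x' p) := by
      apply Subtype.ext
      change g (((P.complex.d (k+1) k).hom : P.complex.X (k+1) →ₗ[R] P.complex.X k) p) = _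
      rw [hgp]
      rfl
    rw [hsub]
    exact eN.symm_apply_apply (x' p)
  have h2 : IsZero ((P.complex.linearYonedaObj ℤ N).homology (k+1)) :=
    (HomologicalComplex.exactAt_iff_isZero_homology _ _).1 hexactP
  exact gi_subsingleton_of_isZero (IsZero.of_iso h2 (P.isoExt (k+1) N))
end

section
/- Let X and Y be chain complexes of R-modules, with either X bounded on the right (X_n = 0 for n << 0) or Y bounded on the right. If the complex Hom_R(X_l, Y) is exact for every l ∈ ℤ, then the total Hom complex Hom_R(X, Y) is exact. -/
open CategoryTheory Limits CochainComplex CochainComplex.HomComplex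

section Aux

variable {R : Type} [Ring R] {X Y : CochainComplex (ModuleCat.{0} R) ℤ} {n : ℤ}

lemma aux_d_cast₁ (K : CochainComplex (ModuleCat.{0} R) ℤ) {a a' b : ℤ} (h : a = a') :
    K.d a b = (K.XIsoOfEq h).hom ≫ K.d a' b := by subst h; simp

lemma aux_d_cast₂ (K : CochainComplex (ModuleCat.{0} R) ℤ) {a b b' : ℤ} (h : b = b') :
    K.d a b' = K.d a b ≫ (K.XIsoOfEq h).hom := by subst h; simp

lemma aux_v_cast (z : Cochain X Y n) (p q q' : ℤ) (h : q = q') (hpq : p + n = q) :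
    z.v p q hpq ≫ (Y.XIsoOfEq h).hom = z.v p q' (h ▸ hpq) := by subst h; simp

/-- The invariant carried by the staircase construction. -/
def StairProp (z : Cochain X Y n) (p : ℤ) (f : X.X p ⟶ Y.X (p + n)) : Prop :=
  f ≫ Y.d (p + n) (p + n + 1) = 0 ∧
    ∀ p', p' + 1 = p → X.d p' p ≫ f = X.d p' p ≫ z.v p (p + n) rfl

lemma stair_base (z : Cochain X Y n) (p : ℤ) (hp : z.v p (p + n) rfl = 0) :
    StairProp z p 0 :=
  ⟨zero_comp, fun p' _ => by simp [hp]⟩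

lemma stair_δ (z : Cochain X Y n) (hz : δ n (n + 1) z = 0) (p : ℤ) :
    z.v p (p + n) rfl ≫ Y.d (p + n) (p + n + 1) =
      n.negOnePow • (X.d p (p + 1) ≫ z.v (p + 1) (p + n + 1) (by omega)) := by
  have h := Cochain.congr_v hz p (p + n + 1) (by omega)
  rw [δ_v n (n + 1) rfl z p (p + n + 1) (by omega) (p + n) (p + 1) (by omega) rfl,
    Cochain.zero_v, Int.negOnePow_succ] at h
  rw [add_eq_zero_iff_eq_neg] at h
  rw [h, Units.neg_smul, neg_neg]

lemma stair_step (z : Cochain X Y n) (hz : δ n (n + 1) z = 0) (p : ℤ)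
    (f₁ : X.X (p + 1) ⟶ Y.X (p + 1 + n)) (hf₁ : StairProp z (p + 1) f₁)
    (g₁ : X.X (p + 1) ⟶ Y.X (p + 1 + n - 1))
    (hg₁ : g₁ ≫ Y.d (p + 1 + n - 1) (p + 1 + n) = f₁) :
    StairProp z p (z.v p (p + n) rfl -
      n.negOnePow • (X.d p (p + 1) ≫ g₁ ≫
        (Y.XIsoOfEq (show p + 1 + n - 1 = p + n by omega)).hom)) := by
  constructor
  · have e1 : (Y.XIsoOfEq (show p + 1 + n - 1 = p + n by omega)).hom ≫
        Y.d (p + n) (p + n + 1) =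
        Y.d (p + 1 + n - 1) (p + 1 + n) ≫
          (Y.XIsoOfEq (show p + 1 + n = p + n + 1 by omega)).hom := by
      rw [← aux_d_cast₁ Y (show p + 1 + n - 1 = p + n by omega),
        ← aux_d_cast₂ Y (show p + 1 + n = p + n + 1 by omega)]
    have key : (X.d p (p + 1) ≫ g₁ ≫
        (Y.XIsoOfEq (show p + 1 + n - 1 = p + n by omega)).hom) ≫ Y.d (p + n) (p + n + 1) =
        X.d p (p + 1) ≫ z.v (p + 1) (p + n + 1) (by omega) := by
      rw [Category.assoc, Category.assoc, e1, ← Category.assoc g₁, hg₁,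
        ← Category.assoc (X.d p (p + 1)), hf₁.2 p rfl, Category.assoc,
        aux_v_cast z (p + 1) (p + 1 + n) (p + n + 1)]
    rw [Preadditive.sub_comp, stair_δ z hz p, Linear.units_smul_comp, key, sub_self]
  · intro p' h
    rw [Preadditive.comp_sub, Linear.comp_units_smul, ← Category.assoc (X.d p' p),
      HomologicalComplex.d_comp_d, zero_comp, smul_zero, sub_zero]

/-- The staircase construction producing, at each level `p`, an element of
`Hom(X_p, Y_{p+n})` satisfying `StairProp`. -/
noncomputable def stair (z : Cochain X Y n) (hz : δ n (n + 1) z = 0) (M : ℤ)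
    (hM : ∀ p, M ≤ p → z.v p (p + n) rfl = 0)
    (hex : ∀ (l : ℤ) (f : X.X l ⟶ Y.X (l + n)), f ≫ Y.d (l + n) (l + n + 1) = 0 →
      ∃ g : X.X l ⟶ Y.X (l + n - 1), g ≫ Y.d (l + n - 1) (l + n) = f) :
    ∀ p : ℤ, {f : X.X p ⟶ Y.X (p + n) // StairProp z p f}
  | p =>
    if h : M ≤ p then ⟨0, stair_base z p (hM p h)⟩
    else
      let prev := stair z hz M hM hex (p + 1)
      ⟨_, stair_step z hz p prev.1 prev.2 (hex (p + 1) prev.1 prev.2.1).choose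
        (hex (p + 1) prev.1 prev.2.1).choose_spec⟩
  termination_by p => (M - p).toNat
  decreasing_by simp_wf; omega

end Aux

/-- Let `X, Y` be complexes of `R`-modules (written cohomologically, so that a complex
is "right-bounded" in the homological sense when its components vanish in all
sufficiently large cohomological degrees), with either `X` or `Y` right-bounded.
If the complex `Hom_R(X_l, Y)` is exact for every `l`, then the total Hom complex
`Hom_R(X, Y)` is exact. -/
theorem homComplex_exact_of_levelwise_exact
    (R : Type) [Ring R] (X Y : CochainComplex (ModuleCat.{0} R) ℤ)
    (hbd : (∃ N : ℤ, ∀ n : ℤ, N ≤ n → IsZero (X.X n)) ∨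
           (∃ N : ℤ, ∀ n : ℤ, N ≤ n → IsZero (Y.X n)))
    (hexact : ∀ (l n : ℤ) (f : X.X l →ₗ[R] Y.X n),
      ((Y.d n (n + 1)).hom : Y.X n →ₗ[R] Y.X (n + 1)).comp f = 0 →
        ∃ g : X.X l →ₗ[R] Y.X (n - 1),
          ((Y.d (n - 1) n).hom : Y.X (n - 1) →ₗ[R] Y.X n).comp g = f) :
    ∀ n : ℤ, (CochainComplex.HomComplex X Y).ExactAt n := by
  intro n
  rw [HomologicalComplex.exactAt_iff' _ (n - 1) n (n + 1)
    (by simp) (by simp)]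
  rw [ShortComplex.ab_exact_iff]
  intro (z : Cochain X Y n) hz
  have hz' : δ n (n + 1) z = 0 := hz
  have hex : ∀ (l : ℤ) (f : X.X l ⟶ Y.X (l + n)), f ≫ Y.d (l + n) (l + n + 1) = 0 →
      ∃ g : X.X l ⟶ Y.X (l + n - 1), g ≫ Y.d (l + n - 1) (l + n) = f := by
    intro l f hf
    obtain ⟨g, hg⟩ := hexact l (l + n) f.hom (by rw [← ModuleCat.hom_comp, hf, ModuleCat.hom_zero])
    exact ⟨ModuleCat.ofHom g, ModuleCat.hom_ext (by rw [ModuleCat.hom_comp, ModuleCat.hom_ofHom, hg])⟩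
  obtain ⟨M, hM, hzero⟩ : ∃ M : ℤ, (∀ p, M ≤ p → z.v p (p + n) rfl = 0) ∧
      (∀ p q, M ≤ p → p + n = q → ∀ (f g : X.X p ⟶ Y.X q), f = g) := by
    obtain ⟨N, hN⟩ | ⟨N, hN⟩ := hbd
    · exact ⟨N, fun p hp => (hN p hp).eq_of_src _ _,
        fun p q hp hpq f g => (hN p hp).eq_of_src f g⟩
    · exact ⟨N - n, fun p hp => (hN (p + n) (by omega)).eq_of_tgt _ _,
        fun p q hp hpq f g => (hN q (by omega)).eq_of_tgt f g⟩
  set F := stair z hz' M hM hex with hF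
  set lift : ∀ p : ℤ, X.X p ⟶ Y.X (p + n - 1) :=
    fun p => (hex p (F p).1 (F p).2.1).choose with hliftdef
  have hlift : ∀ p, lift p ≫ Y.d (p + n - 1) (p + n) = (F p).1 :=
    fun p => (hex p (F p).1 (F p).2.1).choose_spec
  set g : Cochain X Y (n - 1) := Cochain.mk (fun p q hpq =>
    lift p ≫ (Y.XIsoOfEq (show p + n - 1 = q by omega)).hom) with hg
  have hgv : ∀ p' q' (hpq' : p' + (n - 1) = q'),
      g.v p' q' hpq' = lift p' ≫ (Y.XIsoOfEq (show p' + n - 1 = q' by omega)).hom :=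
    fun _ _ _ => rfl
  refine ⟨g, ?_⟩
  show δ (n - 1) n g = z
  refine Cochain.ext _ _ (fun p q hpq => ?_)
  rw [δ_v (n - 1) n (by omega) g p q hpq (q - 1) (p + 1) rfl rfl]
  by_cases hp : M ≤ p
  · exact hzero p q hp hpq _ _
  · have hFp : (F p).1 = z.v p (p + n) rfl -
        n.negOnePow • (X.d p (p + 1) ≫ lift (p + 1) ≫
          (Y.XIsoOfEq (show p + 1 + n - 1 = p + n by omega)).hom) := by
      conv_lhs => rw [hF, stair]
      rw [dif_neg hp]
    have h1 : g.v p (q - 1) (by omega) ≫ Y.d (q - 1) q =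
        (F p).1 ≫ (Y.XIsoOfEq (show p + n = q by omega)).hom := by
      rw [hgv, Category.assoc, ← aux_d_cast₁ Y (show p + n - 1 = q - 1 by omega),
        aux_d_cast₂ Y (show p + n = q by omega), ← Category.assoc, hlift p]
    rw [h1, hgv, hFp]
    rw [Preadditive.sub_comp, Linear.units_smul_comp, Category.assoc, Category.assoc,
      HomologicalComplex.XIsoOfEq_hom_comp_XIsoOfEq_hom,
      aux_v_cast z p (p + n) q (show p + n = q by omega)]
    abel
end
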